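/- arXiv:1909.00469 — 9 statements merged into one kernel-verified Lean document; each statement's English description precedes it below -/
import Mathlib

section
/- Let r, s, t, u be nonzero real numbers. The set [C_f] of strongly almost convergent double sequences is a Banach space under the norm ‖y‖_{[C_f]} = sup_{q,q′,m,n ∈ ℕ} (1/((q+1)(q′+1))) Σ_{k=m}^{m+q} Σ_{l=n}^{n+q′} |y_{kl}|; that is, this supremum is finite for every y ∈ [C_f], it defines a norm on [C_f], and every sequence of elements of [C_f] that is Cauchy with respect to this norm converges in this norm to an element of [C_f]. -/
open Finset

noncomputable section

/-- The four-dimensional generalized difference matrix `B(r,s,t,u)` acting on a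
double sequence `x : ℕ × ℕ → ℂ`; terms with a negative index are taken to be `0`. -/
def Btrans (r s t u : ℝ) (x : ℕ × ℕ → ℂ) : ℕ × ℕ → ℂ := fun p =>
  (s * u : ℂ) * (if p.1 = 0 ∨ p.2 = 0 then 0 else x (p.1 - 1, p.2 - 1)) +
  (s * t : ℂ) * (if p.1 = 0 then 0 else x (p.1 - 1, p.2)) +
  (r * u : ℂ) * (if p.2 = 0 then 0 else x (p.1, p.2 - 1)) +
  (r * t : ℂ) * x p

/-- `x` is strongly almost convergent to `L` ("[f2]-lim x = L"). -/
def StronglyAlmostConvTo (x : ℕ × ℕ → ℂ) (L : ℂ) : Prop :=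
  ∀ ε > (0 : ℝ), ∃ Q : ℕ, ∀ q q' : ℕ, Q ≤ q → Q ≤ q' → ∀ m n : ℕ,
    (1 / (((q : ℝ) + 1) * ((q' : ℝ) + 1))) *
      ∑ k ∈ Finset.range (q + 1), ∑ l ∈ Finset.range (q' + 1),
        ‖x (m + k, n + l) - L‖ < ε

/-- `x` is almost convergent to `L` ("f2-lim x = L"). -/
def AlmostConvTo (x : ℕ × ℕ → ℂ) (L : ℂ) : Prop :=
  ∀ ε > (0 : ℝ), ∃ Q : ℕ, ∀ q q' : ℕ, Q ≤ q → Q ≤ q' → ∀ m n : ℕ,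
    ‖(1 / (((q : ℂ) + 1) * ((q' : ℂ) + 1))) *
      (∑ k ∈ Finset.range (q + 1), ∑ l ∈ Finset.range (q' + 1), x (m + k, n + l)) - L‖ < ε

/-- The set of values whose supremum is the `[C_f]`-norm of `y`. -/
def CfNormSet (y : ℕ × ℕ → ℂ) : Set ℝ :=
  {v | ∃ q q' m n : ℕ, v = (1 / (((q : ℝ) + 1) * ((q' : ℝ) + 1))) *
    ∑ k ∈ Finset.range (q + 1), ∑ l ∈ Finset.range (q' + 1), ‖y (m + k, n + l)‖}

/-- The `[C_f]`-norm. -/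
def CfNorm (y : ℕ × ℕ → ℂ) : ℝ := sSup (CfNormSet y)

/-- The formal inverse transform of `B(r,s,t,u)`. -/
def Binv (r s t u : ℝ) (y : ℕ × ℕ → ℂ) : ℕ × ℕ → ℂ := fun p =>
  (1 / (r * t : ℂ)) * ∑ k ∈ Finset.range (p.1 + 1), ∑ l ∈ Finset.range (p.2 + 1),
    ((-s : ℂ) / r) ^ (p.1 - k) * ((-u : ℂ) / t) ^ (p.2 - l) * y (k, l)

/-- Pringsheim convergence of a double sequence. -/
def PConvTo (s : ℕ × ℕ → ℂ) (S : ℂ) : Prop :=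
  ∀ ε > (0 : ℝ), ∃ N : ℕ, ∀ m n : ℕ, N ≤ m → N ≤ n → ‖s (m, n) - S‖ < ε

/-- Boundedness of a double sequence. -/
def Bdd2 (s : ℕ × ℕ → ℂ) : Prop := ∃ M : ℝ, ∀ m n : ℕ, ‖s (m, n)‖ ≤ M

/-- bp-convergence: bounded Pringsheim convergence. -/
def BPConvTo (s : ℕ × ℕ → ℂ) (S : ℂ) : Prop := Bdd2 s ∧ PConvTo s S

/-- Rectangular partial sums of a double series. -/
def PartialSums (c : ℕ × ℕ → ℂ) : ℕ × ℕ → ℂ := fun p =>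
  ∑ k ∈ Finset.range (p.1 + 1), ∑ l ∈ Finset.range (p.2 + 1), c (k, l)

/-- bp-convergence of the double series `Σ c_{kl}`. -/
def BPSeriesConv (c : ℕ × ℕ → ℂ) : Prop := ∃ S, BPConvTo (PartialSums c) S

/-- Pringsheim convergence of a real double sequence. -/
def PConvToR (s : ℕ × ℕ → ℝ) (S : ℝ) : Prop :=
  ∀ ε > (0 : ℝ), ∃ N : ℕ, ∀ m n : ℕ, N ≤ m → N ≤ n → |s (m, n) - S| < ε

/-- bp-convergence of a real double sequence. -/
def BPConvToR (s : ℕ × ℕ → ℝ) (S : ℝ) : Prop :=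
  (∃ M : ℝ, ∀ m n : ℕ, |s (m, n)| ≤ M) ∧ PConvToR s S

/-- The rectangle `{(j,k) : m ≤ j ≤ m+p-1, n ≤ k ≤ n+q-1}`. -/
def rectSet (m n p q : ℕ) : Set (ℕ × ℕ) :=
  {jk | m ≤ jk.1 ∧ jk.1 ≤ m + p - 1 ∧ n ≤ jk.2 ∧ jk.2 ≤ n + q - 1}

/-- `E` is uniformly of zero density. -/
def UnifZeroDensity (E : Set (ℕ × ℕ)) : Prop :=
  ∀ ε > (0 : ℝ), ∃ P : ℕ, ∀ p q : ℕ, P ≤ p → P ≤ q → ∀ m n : ℕ,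
    ((E ∩ rectSet m n p q).ncard : ℝ) ≤ ε * p * q

/-- The inner sums `Σ_{j=k}^{m} Σ_{i=l}^{n} (−s/r)^{j−k} (−u/t)^{i−l} a_{ji}`. -/
def innerS (r s t u : ℝ) (a : ℕ × ℕ → ℂ) (k l m n : ℕ) : ℂ :=
  ∑ j ∈ Finset.Icc k m, ∑ i ∈ Finset.Icc l n,
    ((-s : ℂ) / r) ^ (j - k) * ((-u : ℂ) / t) ^ (i - l) * a (j, i)

/-- The matrix `d_{mnkl}(a)` (taken to be `0` when `k > m` or `l > n`). -/
def dmat (r s t u : ℝ) (a : ℕ × ℕ → ℂ) (m n k l : ℕ) : ℂ :=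
  innerS r s t u a k l m n / (r * t : ℂ)

/-- The double difference `Δ₁₁ a_{mnkl}`. -/
def Delta11 (A : ℕ × ℕ → ℕ × ℕ → ℂ) (m n k l : ℕ) : ℂ :=
  A (m, n) (k, l) - A (m, n) (k + 1, l) - A (m, n) (k, l + 1) + A (m, n) (k + 1, l + 1)

/-- The matrix `e_{mnkl}` associated with a four-dimensional matrix `A`
(taken to be `0` when `k > m` or `l > n`). -/
def emat (r s t u : ℝ) (A : ℕ × ℕ → ℕ × ℕ → ℂ) (m n k l : ℕ) : ℂ :=
  ∑ i ∈ Finset.Icc k m, ∑ j ∈ Finset.Icc l n,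
    ((-s : ℂ) / r) ^ (i - k) * ((-u : ℂ) / t) ^ (j - l) * A (m, n) (i, j) / (r * t : ℂ)

/-- `Δ₁₁` applied to the `e`-matrix. -/
def Delta11e (r s t u : ℝ) (A : ℕ × ℕ → ℕ × ℕ → ℂ) (m n k l : ℕ) : ℂ :=
  emat r s t u A m n k l - emat r s t u A m n (k + 1) l -
    emat r s t u A m n k (l + 1) + emat r s t u A m n (k + 1) (l + 1)

end

noncomputable section CfAux

/-- The average appearing in the `[C_f]`-norm. -/
def Savg (y : ℕ × ℕ → ℂ) (q q' m n : ℕ) : ℝ :=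
  (1 / (((q : ℝ) + 1) * ((q' : ℝ) + 1))) *
    ∑ k ∈ Finset.range (q + 1), ∑ l ∈ Finset.range (q' + 1), ‖y (m + k, n + l)‖

lemma Apos (q q' : ℕ) : (0:ℝ) < (((q : ℝ) + 1) * ((q' : ℝ) + 1)) := by positivity

lemma Savg_nonneg (y : ℕ × ℕ → ℂ) (q q' m n : ℕ) : 0 ≤ Savg y q q' m n :=
  mul_nonneg (by positivity)
    (Finset.sum_nonneg fun _ _ => Finset.sum_nonneg fun _ _ => norm_nonneg _)

lemma Savg_mem (y : ℕ × ℕ → ℂ) (q q' m n : ℕ) : Savg y q q' m n ∈ CfNormSet y :=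
  ⟨q, q', m, n, rfl⟩

lemma CfNormSet_eq (y : ℕ × ℕ → ℂ) :
    CfNormSet y = {v | ∃ q q' m n : ℕ, v = Savg y q q' m n} := rfl

lemma CfNormSet_nonempty (y : ℕ × ℕ → ℂ) : (CfNormSet y).Nonempty :=
  ⟨_, Savg_mem y 0 0 0 0⟩

lemma Savg_congr {a b : ℕ × ℕ → ℂ} (h : ∀ p, ‖a p‖ = ‖b p‖)
    (q q' m n : ℕ) : Savg a q q' m n = Savg b q q' m n := by
  unfold Savg; congr 1; exact Finset.sum_congr rfl fun k _ =>
    Finset.sum_congr rfl fun l _ => h _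

lemma Savg_add (a b : ℕ × ℕ → ℂ) (q q' m n : ℕ) :
    Savg (fun p => a p + b p) q q' m n ≤ Savg a q q' m n + Savg b q q' m n := by
  unfold Savg
  rw [← mul_add]
  apply mul_le_mul_of_nonneg_left _ (by positivity)
  rw [← Finset.sum_add_distrib]
  apply Finset.sum_le_sum
  intro k _
  rw [← Finset.sum_add_distrib]
  exact Finset.sum_le_sum fun l _ => norm_add_le _ _

lemma Savg_const (L : ℂ) (q q' m n : ℕ) :
    Savg (fun _ => L) q q' m n = ‖L‖ := by
  unfold Savg
  simp [Finset.sum_const, Finset.card_range]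
  field_simp

lemma Savg_le_const {a : ℕ × ℕ → ℂ} {M : ℝ} (h : ∀ p, ‖a p‖ ≤ M)
    (q q' m n : ℕ) : Savg a q q' m n ≤ M := by
  have h1 : Savg a q q' m n ≤ Savg (fun _ => (M : ℂ)) q q' m n := by
    unfold Savg
    apply mul_le_mul_of_nonneg_left _ (by positivity)
    apply Finset.sum_le_sum; intro k _
    apply Finset.sum_le_sum; intro l _
    calc ‖a (m + k, n + l)‖ ≤ M := h _
      _ ≤ ‖(M : ℂ)‖ := by rw [Complex.norm_real, Real.norm_eq_abs]; exact le_abs_self M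
  have h2 := Savg_const (M : ℂ) q q' m n
  rw [h2, Complex.norm_real, Real.norm_eq_abs] at h1
  have hM : 0 ≤ M := le_trans (norm_nonneg _) (h (0, 0))
  rwa [abs_of_nonneg hM] at h1

lemma Savg_smul (c : ℂ) (y : ℕ × ℕ → ℂ) (q q' m n : ℕ) :
    Savg (c • y) q q' m n = ‖c‖ * Savg y q q' m n := by
  unfold Savg
  rw [mul_left_comm]
  congr 1
  rw [Finset.mul_sum]
  apply Finset.sum_congr rfl; intro k _
  rw [Finset.mul_sum]
  apply Finset.sum_congr rfl; intro l _
  simp [map_mul]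

/-- Pointwise boundedness of strongly almost convergent sequences. -/
lemma bdd_of_SAC {y : ℕ × ℕ → ℂ} {L : ℂ} (h : StronglyAlmostConvTo y L) :
    ∃ M : ℝ, ∀ p : ℕ × ℕ, ‖y p‖ ≤ M := by
  obtain ⟨Q, hQ⟩ := h 1 one_pos
  refine ⟨((Q : ℝ) + 1) * ((Q : ℝ) + 1) + ‖L‖, fun p => ?_⟩
  have h1 := hQ Q Q le_rfl le_rfl p.1 p.2
  have hA := Apos Q Q
  have hsum : ∑ k ∈ Finset.range (Q + 1), ∑ l ∈ Finset.range (Q + 1),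
      ‖y (p.1 + k, p.2 + l) - L‖ ≤ ((Q : ℝ) + 1) * ((Q : ℝ) + 1) := by
    rw [one_div, inv_mul_eq_div, div_lt_one hA] at h1
    exact le_of_lt h1
  have hterm : ‖y (p.1 + 0, p.2 + 0) - L‖ ≤
      ∑ k ∈ Finset.range (Q + 1), ∑ l ∈ Finset.range (Q + 1),
        ‖y (p.1 + k, p.2 + l) - L‖ := by
    have h0 : (0 : ℕ) ∈ Finset.range (Q + 1) := Finset.mem_range.mpr (Nat.succ_pos Q)
    calc ‖y (p.1 + 0, p.2 + 0) - L‖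
        ≤ ∑ l ∈ Finset.range (Q + 1), ‖y (p.1 + 0, p.2 + l) - L‖ :=
          Finset.single_le_sum (f := fun l => ‖y (p.1 + 0, p.2 + l) - L‖)
            (fun _ _ => norm_nonneg _) h0
      _ ≤ _ := Finset.single_le_sum
          (f := fun k => ∑ l ∈ Finset.range (Q + 1), ‖y (p.1 + k, p.2 + l) - L‖)
          (fun k _ => Finset.sum_nonneg fun _ _ => norm_nonneg _) h0
  simp only [Nat.add_zero] at hterm
  calc ‖y p‖ = ‖y (p.1, p.2) - L + L‖ := by
        rw [sub_add_cancel]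
      _ ≤ ‖y (p.1, p.2) - L‖ + ‖L‖ := norm_add_le _ _
      _ ≤ ((Q : ℝ) + 1) * ((Q : ℝ) + 1) + ‖L‖ :=
          add_le_add (le_trans hterm hsum) le_rfl

lemma bddAbove_of_SAC {y : ℕ × ℕ → ℂ} (h : ∃ L, StronglyAlmostConvTo y L) :
    BddAbove (CfNormSet y) := by
  obtain ⟨L, hL⟩ := h
  obtain ⟨M, hM⟩ := bdd_of_SAC hL
  exact ⟨M, fun v hv => by obtain ⟨q, q', m, n, rfl⟩ := hv
                           exact Savg_le_const hM q q' m n⟩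

lemma Savg_le_CfNorm {y : ℕ × ℕ → ℂ} (h : BddAbove (CfNormSet y)) (q q' m n : ℕ) :
    Savg y q q' m n ≤ CfNorm y := le_csSup h (Savg_mem y q q' m n)

lemma CfNorm_nonneg' {y : ℕ × ℕ → ℂ} (h : BddAbove (CfNormSet y)) : 0 ≤ CfNorm y :=
  le_trans (Savg_nonneg y 0 0 0 0) (Savg_le_CfNorm h 0 0 0 0)

lemma abs_le_CfNorm {y : ℕ × ℕ → ℂ} (h : BddAbove (CfNormSet y)) (p : ℕ × ℕ) :
    ‖y p‖ ≤ CfNorm y := by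
  have := Savg_le_CfNorm h 0 0 p.1 p.2
  unfold Savg at this
  simpa using this

/-- SAC is closed under subtraction. -/
lemma SAC_sub {x z : ℕ × ℕ → ℂ} {L M : ℂ} (hx : StronglyAlmostConvTo x L)
    (hz : StronglyAlmostConvTo z M) : StronglyAlmostConvTo (x - z) (L - M) := by
  intro ε hε
  obtain ⟨Q1, hQ1⟩ := hx (ε / 2) (by linarith)
  obtain ⟨Q2, hQ2⟩ := hz (ε / 2) (by linarith)
  refine ⟨max Q1 Q2, fun q q' hq hq' m n => ?_⟩
  have h1 := hQ1 q q' (le_trans (le_max_left _ _) hq) (le_trans (le_max_left _ _) hq') m n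
  have h2 := hQ2 q q' (le_trans (le_max_right _ _) hq) (le_trans (le_max_right _ _) hq') m n
  have key : Savg (fun p => (x - z) p - (L - M)) q q' m n ≤
      Savg (fun p => x p - L) q q' m n + Savg (fun p => z p - M) q q' m n := by
    have := Savg_add (fun p => x p - L) (fun p => -(z p - M)) q q' m n
    have heq : Savg (fun p => (x - z) p - (L - M)) q q' m n =
        Savg (fun p => (x p - L) + -(z p - M)) q q' m n := by
      apply Savg_congr; intro p; congr 1; simp [Pi.sub_apply]; ring
    have heq2 : Savg (fun p => -(z p - M)) q q' m n = Savg (fun p => z p - M) q q' m n := by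
      apply Savg_congr; intro p; exact norm_neg _
    rw [heq, ← heq2]; exact this
  calc (1 / (((q : ℝ) + 1) * ((q' : ℝ) + 1))) *
      ∑ k ∈ Finset.range (q + 1), ∑ l ∈ Finset.range (q' + 1),
        ‖(x - z) (m + k, n + l) - (L - M)‖
      = Savg (fun p => (x - z) p - (L - M)) q q' m n := rfl
    _ ≤ Savg (fun p => x p - L) q q' m n + Savg (fun p => z p - M) q q' m n := key
    _ < ε / 2 + ε / 2 := add_lt_add h1 h2
    _ = ε := by ring

lemma bddAbove_zero : BddAbove (CfNormSet (0 : ℕ × ℕ → ℂ)) :=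
  ⟨0, by rintro v ⟨q, q', m, n, rfl⟩
         exact Savg_le_const (a := (0 : ℕ × ℕ → ℂ)) (M := 0) (fun p => by simp) q q' m n⟩

lemma CfNorm_zero : CfNorm (0 : ℕ × ℕ → ℂ) = 0 := by
  apply le_antisymm
  · apply csSup_le (CfNormSet_nonempty 0)
    rintro v ⟨q, q', m, n, rfl⟩
    exact Savg_le_const (a := (0 : ℕ × ℕ → ℂ)) (M := 0) (fun p => by simp) q q' m n
  · exact CfNorm_nonneg' bddAbove_zero

lemma CfNorm_smul (c : ℂ) {y : ℕ × ℕ → ℂ} (hb : BddAbove (CfNormSet y)) :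
    CfNorm (c • y) = ‖c‖ * CfNorm y := by
  rcases eq_or_ne c 0 with rfl | hc
  · rw [zero_smul, CfNorm_zero, norm_zero, zero_mul]
  · have hcpos : 0 < ‖c‖ := norm_pos_iff.mpr hc
    obtain ⟨M, hM⟩ := hb
    have hbc : BddAbove (CfNormSet (c • y)) := by
      refine ⟨‖c‖ * M, ?_⟩
      rintro v ⟨q, q', m, n, rfl⟩
      show Savg (c • y) q q' m n ≤ ‖c‖ * M
      rw [Savg_smul]
      exact mul_le_mul_of_nonneg_left (hM (Savg_mem y q q' m n)) (norm_nonneg c)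
    apply le_antisymm
    · apply csSup_le (CfNormSet_nonempty _)
      rintro v ⟨q, q', m, n, rfl⟩
      show Savg (c • y) q q' m n ≤ ‖c‖ * CfNorm y
      rw [Savg_smul]
      exact mul_le_mul_of_nonneg_left (Savg_le_CfNorm ⟨M, hM⟩ q q' m n) (norm_nonneg c)
    · have hle : CfNorm y ≤ CfNorm (c • y) / ‖c‖ := by
        apply csSup_le (CfNormSet_nonempty y)
        rintro v ⟨q, q', m, n, rfl⟩
        rw [le_div_iff₀ hcpos]
        show Savg y q q' m n * ‖c‖ ≤ CfNorm (c • y)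
        rw [mul_comm, ← Savg_smul]
        exact Savg_le_CfNorm hbc q q' m n
      calc ‖c‖ * CfNorm y ≤ ‖c‖ * (CfNorm (c • y) / ‖c‖) :=
            mul_le_mul_of_nonneg_left hle (norm_nonneg c)
        _ = CfNorm (c • y) := mul_div_cancel₀ _ (ne_of_gt hcpos)

end CfAux

/-- `[C_f]` is a Banach space under the norm
`‖y‖ = sup_{q,q',m,n} (1/((q+1)(q'+1))) Σ |y_{kl}|`. -/
theorem stmt0 (r s t u : ℝ) (hr : r ≠ 0) (hs : s ≠ 0) (ht : t ≠ 0) (hu : u ≠ 0) :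
    -- the supremum is finite for every member of [C_f]
    (∀ y : ℕ × ℕ → ℂ, (∃ L, StronglyAlmostConvTo y L) → BddAbove (CfNormSet y)) ∧
    -- norm axioms on [C_f]
    (∀ y : ℕ × ℕ → ℂ, (∃ L, StronglyAlmostConvTo y L) → (CfNorm y = 0 ↔ y = 0)) ∧
    (∀ y : ℕ × ℕ → ℂ, (∃ L, StronglyAlmostConvTo y L) → 0 ≤ CfNorm y) ∧
    (∀ (c : ℂ) (y : ℕ × ℕ → ℂ), (∃ L, StronglyAlmostConvTo y L) →
      CfNorm (c • y) = ‖c‖ * CfNorm y) ∧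
    (∀ y z : ℕ × ℕ → ℂ, (∃ L, StronglyAlmostConvTo y L) → (∃ L, StronglyAlmostConvTo z L) →
      CfNorm (y + z) ≤ CfNorm y + CfNorm z) ∧
    -- completeness: every Cauchy sequence in ([C_f], ‖·‖) converges in norm to a member of [C_f]
    (∀ F : ℕ → (ℕ × ℕ → ℂ), (∀ i, ∃ L, StronglyAlmostConvTo (F i) L) →
      (∀ ε > (0 : ℝ), ∃ N : ℕ, ∀ i j : ℕ, N ≤ i → N ≤ j → CfNorm (F i - F j) < ε) →
      ∃ y : ℕ × ℕ → ℂ, (∃ L, StronglyAlmostConvTo y L) ∧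
        ∀ ε > (0 : ℝ), ∃ N : ℕ, ∀ i : ℕ, N ≤ i → CfNorm (F i - y) < ε) := by
  refine ⟨fun y hy => bddAbove_of_SAC hy, ?_, fun y hy => CfNorm_nonneg' (bddAbove_of_SAC hy),
    ?_, ?_, ?_⟩
  · -- CfNorm y = 0 ↔ y = 0
    intro y hy
    have hb := bddAbove_of_SAC hy
    constructor
    · intro h0
      funext p
      have h1 := abs_le_CfNorm hb p
      rw [h0] at h1
      have h2 : ‖y p‖ = 0 := le_antisymm h1 (norm_nonneg _)
      simpa using norm_eq_zero.mp h2
    · intro h0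
      subst h0
      exact CfNorm_zero
  · -- homogeneity
    intro c y hy
    exact CfNorm_smul c (bddAbove_of_SAC hy)
  · -- triangle inequality
    intro y z hy hz
    have hby := bddAbove_of_SAC hy
    have hbz := bddAbove_of_SAC hz
    apply csSup_le (CfNormSet_nonempty _)
    rintro v ⟨q, q', m, n, rfl⟩
    show Savg (fun p => y p + z p) q q' m n ≤ CfNorm y + CfNorm z
    calc Savg (fun p => y p + z p) q q' m n
        ≤ Savg y q q' m n + Savg z q q' m n := Savg_add y z q q' m n
      _ ≤ CfNorm y + CfNorm z :=
          add_le_add (Savg_le_CfNorm hby q q' m n) (Savg_le_CfNorm hbz q q' m n)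
  · -- completeness
    intro F hFL hC
    choose L hSAC using hFL
    have hbij : ∀ i j, BddAbove (CfNormSet (F i - F j)) := fun i j =>
      bddAbove_of_SAC ⟨_, SAC_sub (hSAC i) (hSAC j)⟩
    have hpt : ∀ p : ℕ × ℕ, CauchySeq (fun i => F i p) := by
      intro p
      rw [Metric.cauchySeq_iff]
      intro ε hε
      obtain ⟨N, hN⟩ := hC ε hε
      refine ⟨N, fun i hi j hj => ?_⟩
      have hd : dist (F i p) (F j p) = ‖(F i - F j) p‖ := Complex.dist_eq _ _
      rw [hd]
      exact lt_of_le_of_lt (abs_le_CfNorm (hbij i j) p) (hN i j hi hj)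
    choose y hy using fun p => cauchySeq_tendsto_of_complete (hpt p)
    have key : ∀ ε > (0:ℝ), ∃ N, ∀ i, N ≤ i → ∀ q q' m n,
        Savg (F i - y) q q' m n ≤ ε / 2 := by
      intro ε hε
      obtain ⟨N, hN⟩ := hC (ε/2) (by linarith)
      refine ⟨N, fun i hi q q' m n => ?_⟩
      have htend : Filter.Tendsto (fun j => Savg (F i - F j) q q' m n) Filter.atTop
          (nhds (Savg (F i - y) q q' m n)) := by
        unfold Savg
        apply Filter.Tendsto.const_mul
        apply tendsto_finset_sum; intro k _
        apply tendsto_finset_sum; intro l _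
        have h1 : Filter.Tendsto (fun j => (F i - F j) (m + k, n + l)) Filter.atTop
            (nhds ((F i - y) (m + k, n + l))) :=
          tendsto_const_nhds.sub (hy (m + k, n + l))
        exact (continuous_norm.tendsto _).comp h1
      apply le_of_tendsto htend
      filter_upwards [Filter.eventually_ge_atTop N] with j hj
      exact le_of_lt (lt_of_le_of_lt (Savg_le_CfNorm (hbij i j) q q' m n) (hN i j hi hj))
    have hLc : CauchySeq L := by
      rw [Metric.cauchySeq_iff]
      intro ε hε
      obtain ⟨N, hN⟩ := hC (ε/3) (by linarith)
      refine ⟨N, fun i hi j hj => ?_⟩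
      obtain ⟨Qi, hQi⟩ := hSAC i (ε/3) (by linarith)
      obtain ⟨Qj, hQj⟩ := hSAC j (ε/3) (by linarith)
      set q := max Qi Qj with hqdef
      have hi' : Savg (fun p => F i p - L i) q q 0 0 < ε/3 :=
        hQi q q (le_max_left _ _) (le_max_left _ _) 0 0
      have hj' : Savg (fun p => F j p - L j) q q 0 0 < ε/3 :=
        hQj q q (le_max_right _ _) (le_max_right _ _) 0 0
      have hmid : Savg (fun p => F i p - F j p) q q 0 0 < ε/3 :=
        lt_of_le_of_lt (Savg_le_CfNorm (hbij i j) q q 0 0) (hN i j hi hj)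
      have hd : dist (L i) (L j) = ‖L i - L j‖ := Complex.dist_eq _ _
      rw [hd, ← Savg_const (L i - L j) q q 0 0]
      have heq : (fun _ : ℕ × ℕ => L i - L j) =
          (fun p => (L i - F i p) + ((F i p - F j p) + (F j p - L j))) := by
        funext p; ring
      rw [heq]
      have h1 : Savg (fun p => L i - F i p) q q 0 0 =
          Savg (fun p => F i p - L i) q q 0 0 :=
        Savg_congr (fun p => norm_sub_rev _ _) q q 0 0
      calc Savg (fun p => (L i - F i p) + ((F i p - F j p) + (F j p - L j))) q q 0 0
          ≤ Savg (fun p => L i - F i p) q q 0 0 +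
            Savg (fun p => (F i p - F j p) + (F j p - L j)) q q 0 0 :=
            Savg_add _ _ q q 0 0
        _ ≤ Savg (fun p => L i - F i p) q q 0 0 +
            (Savg (fun p => F i p - F j p) q q 0 0 +
             Savg (fun p => F j p - L j) q q 0 0) :=
            add_le_add le_rfl (Savg_add _ _ q q 0 0)
        _ < ε := by rw [h1]; linarith
    obtain ⟨Ll, hLl⟩ := cauchySeq_tendsto_of_complete hLc
    rw [Metric.tendsto_atTop] at hLl
    have hySAC : StronglyAlmostConvTo y Ll := by
      intro ε hε
      obtain ⟨N1, hN1⟩ := key (ε/3) (by linarith)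
      obtain ⟨N2, hN2⟩ := hLl (ε/3) (by linarith)
      set i := max N1 N2 with hidef
      have hia : Savg (F i - y) = fun q q' m n => Savg (F i - y) q q' m n := rfl
      have hkey : ∀ q q' m n, Savg (F i - y) q q' m n ≤ ε/3/2 :=
        hN1 i (le_max_left _ _)
      have hdist : ‖L i - Ll‖ < ε/3 := by
        have := hN2 i (le_max_right _ _)
        rwa [Complex.dist_eq] at this
      obtain ⟨Q, hQ⟩ := hSAC i (ε/3) (by linarith)
      refine ⟨Q, fun q q' hq hq' m n => ?_⟩
      show Savg (fun p => y p - Ll) q q' m n < ε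
      have heq : (fun p : ℕ × ℕ => y p - Ll) =
          (fun p => (y p - F i p) + ((F i p - L i) + (L i - Ll))) := by
        funext p; ring
      rw [heq]
      have h1 : Savg (fun p => y p - F i p) q q' m n =
          Savg (F i - y) q q' m n :=
        Savg_congr (fun p => norm_sub_rev _ _) q q' m n
      have h2 : Savg (fun p => F i p - L i) q q' m n < ε/3 := hQ q q' hq hq' m n
      have h3 : Savg (fun _ : ℕ × ℕ => L i - Ll) q q' m n = ‖L i - Ll‖ :=
        Savg_const _ q q' m n
      calc Savg (fun p => (y p - F i p) + ((F i p - L i) + (L i - Ll))) q q' m n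
          ≤ Savg (fun p => y p - F i p) q q' m n +
            Savg (fun p => (F i p - L i) + (L i - Ll)) q q' m n :=
            Savg_add _ _ q q' m n
        _ ≤ Savg (fun p => y p - F i p) q q' m n +
            (Savg (fun p => F i p - L i) q q' m n +
             Savg (fun _ : ℕ × ℕ => L i - Ll) q q' m n) :=
            add_le_add le_rfl (Savg_add _ _ q q' m n)
        _ < ε := by rw [h1, h3]; have := hkey q q' m n; linarith
    refine ⟨y, ⟨Ll, hySAC⟩, ?_⟩
    intro ε hε
    obtain ⟨N, hN⟩ := key ε hε
    refine ⟨N, fun i hi => ?_⟩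
    have hle : CfNorm (F i - y) ≤ ε / 2 := by
      apply csSup_le (CfNormSet_nonempty _)
      rintro v ⟨q, q', m, n, rfl⟩
      exact hN i hi q q' m n
    linarith
end

section
/- Let r, s, t, u be nonzero real numbers. The space B[C_f] = {x : B(r,s,t,u)x ∈ [C_f]} is a Banach space under the norm ‖x‖_{B[C_f]} = sup_{q,q′,m,n ∈ ℕ} (1/((q+1)(q′+1))) Σ_{k=m}^{m+q} Σ_{l=n}^{n+q′} |(Bx)_{kl}|; that is, this supremum is finite for every x ∈ B[C_f], it defines a norm on B[C_f], and every sequence of elements of B[C_f] that is Cauchy with respect to this norm converges in this norm to an element of B[C_f]. -/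
open Finset

noncomputable section Aux
open Pointwise
namespace CfAux

/-- window average of absolute values -/
def avg (y : ℕ × ℕ → ℂ) (q q' m n : ℕ) : ℝ :=
  (1 / (((q : ℝ) + 1) * ((q' : ℝ) + 1))) *
    ∑ k ∈ Finset.range (q + 1), ∑ l ∈ Finset.range (q' + 1),
      ‖y (m + k, n + l)‖

lemma sac_iff (x : ℕ × ℕ → ℂ) (L : ℂ) : StronglyAlmostConvTo x L ↔
    ∀ ε > (0 : ℝ), ∃ Q : ℕ, ∀ q q' : ℕ, Q ≤ q → Q ≤ q' → ∀ m n : ℕ,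
      avg (fun p => x p - L) q q' m n < ε := Iff.rfl

lemma avg_nonneg (y : ℕ × ℕ → ℂ) (q q' m n : ℕ) : 0 ≤ avg y q q' m n := by
  apply mul_nonneg
  · positivity
  · exact Finset.sum_nonneg fun k _ => Finset.sum_nonneg fun l _ => norm_nonneg _

lemma mem_cfNormSet_iff (y : ℕ × ℕ → ℂ) (v : ℝ) :
    v ∈ CfNormSet y ↔ ∃ q q' m n : ℕ, v = avg y q q' m n := Iff.rfl

lemma avg_mem (y : ℕ × ℕ → ℂ) (q q' m n : ℕ) : avg y q q' m n ∈ CfNormSet y :=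
  ⟨q, q', m, n, rfl⟩

lemma cfNormSet_nonempty (y : ℕ × ℕ → ℂ) : (CfNormSet y).Nonempty :=
  ⟨_, avg_mem y 0 0 0 0⟩

lemma avg_zero_zero (y : ℕ × ℕ → ℂ) (m n : ℕ) :
    avg y 0 0 m n = ‖y (m, n)‖ := by
  simp [avg]

lemma avg_le (y : ℕ × ℕ → ℂ) {C : ℝ} (h : ∀ p, ‖y p‖ ≤ C)
    (q q' m n : ℕ) : avg y q q' m n ≤ C := by
  have h1 : ∑ k ∈ Finset.range (q + 1), ∑ l ∈ Finset.range (q' + 1),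
      ‖y (m + k, n + l)‖ ≤ ((q : ℝ) + 1) * ((q' : ℝ) + 1) * C := by
    calc ∑ k ∈ Finset.range (q + 1), ∑ l ∈ Finset.range (q' + 1),
        ‖y (m + k, n + l)‖
        ≤ ∑ _k ∈ Finset.range (q + 1), ∑ _l ∈ Finset.range (q' + 1), C :=
          Finset.sum_le_sum fun k _ => Finset.sum_le_sum fun l _ => h _
      _ = ((q : ℝ) + 1) * ((q' : ℝ) + 1) * C := by
          simp only [Finset.sum_const, Finset.card_range, nsmul_eq_mul]; push_cast; ring
  have hpos : (0:ℝ) < ((q : ℝ) + 1) * ((q' : ℝ) + 1) := by positivity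
  rw [avg, one_div, inv_mul_le_iff₀ hpos]
  linarith [h1]

lemma avg_le_add3 (y z1 z2 z3 : ℕ × ℕ → ℂ)
    (h : ∀ p, ‖y p‖ ≤ ‖z1 p‖ + ‖z2 p‖ + ‖z3 p‖)
    (q q' m n : ℕ) :
    avg y q q' m n ≤ avg z1 q q' m n + avg z2 q q' m n + avg z3 q q' m n := by
  unfold avg
  rw [← mul_add, ← mul_add]
  apply mul_le_mul_of_nonneg_left _ (by positivity)
  rw [← Finset.sum_add_distrib, ← Finset.sum_add_distrib]
  refine Finset.sum_le_sum fun k _ => ?_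
  rw [← Finset.sum_add_distrib, ← Finset.sum_add_distrib]
  exact Finset.sum_le_sum fun l _ => h _

lemma avg_le_add2 (y z1 z2 : ℕ × ℕ → ℂ)
    (h : ∀ p, ‖y p‖ ≤ ‖z1 p‖ + ‖z2 p‖)
    (q q' m n : ℕ) :
    avg y q q' m n ≤ avg z1 q q' m n + avg z2 q q' m n := by
  have := avg_le_add3 y z1 z2 0 (by intro p; simpa using h p) q q' m n
  simpa [avg] using this

lemma avg_const (c : ℂ) (q q' m n : ℕ) :
    avg (fun _ => c) q q' m n = ‖c‖ := by
  have hpos : (0:ℝ) < ((q : ℝ) + 1) * ((q' : ℝ) + 1) := by positivity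
  rw [avg]
  rw [Finset.sum_const, Finset.sum_const]
  simp only [Finset.card_range, nsmul_eq_mul]
  push_cast
  field_simp

lemma sac_bound {y : ℕ × ℕ → ℂ} {L : ℂ} (h : StronglyAlmostConvTo y L) :
    ∃ M : ℝ, ∀ p, ‖y p‖ ≤ M := by
  obtain ⟨Q, hQ⟩ := (sac_iff y L).1 h 1 one_pos
  refine ⟨((Q : ℝ) + 1) * ((Q : ℝ) + 1) + ‖L‖, fun p => ?_⟩
  have h1 := hQ Q Q le_rfl le_rfl p.1 p.2
  have hpos : (0:ℝ) < ((Q : ℝ) + 1) * ((Q : ℝ) + 1) := by positivity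
  have h2 : ‖y p - L‖ ≤ ∑ k ∈ Finset.range (Q + 1), ∑ l ∈ Finset.range (Q + 1),
      ‖y (p.1 + k, p.2 + l) - L‖ := by
    have := Finset.single_le_sum (f := fun k => ∑ l ∈ Finset.range (Q + 1),
        ‖y (p.1 + k, p.2 + l) - L‖)
      (fun k _ => Finset.sum_nonneg fun l _ => norm_nonneg _)
      (Finset.mem_range.2 (Nat.succ_pos Q))
    refine le_trans ?_ this
    have := Finset.single_le_sum (f := fun l => ‖y (p.1 + 0, p.2 + l) - L‖)
      (fun l _ => norm_nonneg _) (Finset.mem_range.2 (Nat.succ_pos Q))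
    simpa using this
  have h3 : ‖y p - L‖ < ((Q : ℝ) + 1) * ((Q : ℝ) + 1) := by
    rw [avg, one_div, inv_mul_lt_iff₀ hpos] at h1
    calc ‖y p - L‖ ≤ _ := h2
      _ < ((Q : ℝ) + 1) * ((Q : ℝ) + 1) * 1 := h1
      _ = _ := mul_one _
  calc ‖y p‖ ≤ ‖y p - L‖ + ‖L‖ := by
        simpa using norm_add_le (y p - L) L
    _ ≤ _ := by linarith

lemma bddAbove_of_sac {y : ℕ × ℕ → ℂ} {L : ℂ} (h : StronglyAlmostConvTo y L) :
    BddAbove (CfNormSet y) := by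
  obtain ⟨M, hM⟩ := sac_bound h
  exact ⟨M, fun v ⟨q, q', m, n, hv⟩ => hv ▸ avg_le y hM q q' m n⟩

lemma avg_le_cfNorm {y : ℕ × ℕ → ℂ} (hb : BddAbove (CfNormSet y)) (q q' m n : ℕ) :
    avg y q q' m n ≤ CfNorm y := le_csSup hb (avg_mem y q q' m n)


section Lin
variable (r s t u : ℝ)

lemma btrans_add (x z : ℕ × ℕ → ℂ) :
    Btrans r s t u (x + z) = Btrans r s t u x + Btrans r s t u z := by
  funext p
  simp only [Btrans, Pi.add_apply]
  split_ifs <;> ring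

lemma btrans_sub (x z : ℕ × ℕ → ℂ) :
    Btrans r s t u (x - z) = Btrans r s t u x - Btrans r s t u z := by
  funext p
  simp only [Btrans, Pi.sub_apply]
  split_ifs <;> ring

lemma btrans_smul (c : ℂ) (x : ℕ × ℕ → ℂ) :
    Btrans r s t u (c • x) = c • Btrans r s t u x := by
  funext p
  simp only [Btrans, Pi.smul_apply, smul_eq_mul]
  split_ifs <;> ring

lemma btrans_zero : Btrans r s t u (0 : ℕ × ℕ → ℂ) = 0 := by
  funext p
  simp only [Btrans, Pi.zero_apply]
  split_ifs <;> ring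

lemma btrans_injective (hr : r ≠ 0) (ht : t ≠ 0) {x : ℕ × ℕ → ℂ}
    (h : Btrans r s t u x = 0) : x = 0 := by
  have hrt : (r : ℂ) * t ≠ 0 := by
    simp [hr, ht]
  have key : ∀ N : ℕ, ∀ m n : ℕ, m + n = N → x (m, n) = 0 := by
    intro N
    induction N using Nat.strong_induction_on with
    | _ N ih =>
      intro m n hmn
      have h0 := congrFun h (m, n)
      simp only [Btrans, Pi.zero_apply] at h0
      have e1 : (if m = 0 ∨ n = 0 then 0 else x (m - 1, n - 1)) = 0 := by
        split_ifs with hc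
        · rfl
        · push_neg at hc
          exact ih (m - 1 + (n - 1)) (by omega) _ _ rfl
      have e2 : (if m = 0 then 0 else x (m - 1, n)) = 0 := by
        split_ifs with hc
        · rfl
        · exact ih (m - 1 + n) (by omega) _ _ rfl
      have e3 : (if n = 0 then 0 else x (m, n - 1)) = 0 := by
        split_ifs with hc
        · rfl
        · exact ih (m + (n - 1)) (by omega) _ _ rfl
      rw [e1, e2, e3] at h0
      simp only [mul_zero, zero_add] at h0
      have : (r : ℂ) * t * x (m, n) = 0 := by
        linear_combination h0
      exact (mul_eq_zero.1 this).resolve_left hrt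
  funext p
  exact key (p.1 + p.2) p.1 p.2 rfl

end Lin

/-- solve B y = g by double recursion -/
def Bsolve (r s t u : ℝ) (g : ℕ × ℕ → ℂ) : ℕ × ℕ → ℂ := fun p =>
  (g p - (s * u : ℂ) * (if h : p.1 = 0 ∨ p.2 = 0 then 0 else Bsolve r s t u g (p.1 - 1, p.2 - 1))
       - (s * t : ℂ) * (if h : p.1 = 0 then 0 else Bsolve r s t u g (p.1 - 1, p.2))
       - (r * u : ℂ) * (if h : p.2 = 0 then 0 else Bsolve r s t u g (p.1, p.2 - 1)))
    / (r * t : ℂ)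
  termination_by p => p.1 + p.2
  decreasing_by
    · push_neg at h; omega
    · omega
    · omega

lemma btrans_bsolve (r s t u : ℝ) (hr : r ≠ 0) (ht : t ≠ 0) (g : ℕ × ℕ → ℂ) :
    Btrans r s t u (Bsolve r s t u g) = g := by
  have hrt : (r : ℂ) * t ≠ 0 := by simp [hr, ht]
  funext p
  simp only [Btrans]
  nth_rewrite 4 [Bsolve]
  simp only [dite_eq_ite]
  have hr' : (r:ℂ) ≠ 0 := by exact_mod_cast hr
  have ht' : (t:ℂ) ≠ 0 := by exact_mod_cast ht
  field_simp
  ring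


lemma abs_sub_le3 (a b : ℂ) : ‖a - b‖ ≤ ‖a‖ + ‖b‖ := by
  simpa [sub_eq_add_neg] using norm_add_le a (-b)

lemma abs_add3 (a b c : ℂ) :
    ‖a + b + c‖ ≤ ‖a‖ + ‖b‖ + ‖c‖ :=
  (norm_add_le _ _).trans (add_le_add_left (norm_add_le _ _) _)

lemma sac_sub {y z : ℕ × ℕ → ℂ} {Ly Lz : ℂ} (hy : StronglyAlmostConvTo y Ly)
    (hz : StronglyAlmostConvTo z Lz) : StronglyAlmostConvTo (y - z) (Ly - Lz) := by
  rw [sac_iff] at hy hz ⊢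
  intro ε hε
  obtain ⟨Q1, h1⟩ := hy (ε / 2) (half_pos hε)
  obtain ⟨Q2, h2⟩ := hz (ε / 2) (half_pos hε)
  refine ⟨max Q1 Q2, fun q q' hq hq' m n => ?_⟩
  have key : avg (fun p => (y - z) p - (Ly - Lz)) q q' m n ≤
      avg (fun p => y p - Ly) q q' m n + avg (fun p => z p - Lz) q q' m n := by
    apply avg_le_add2
    intro p
    have he : (y - z) p - (Ly - Lz) = (y p - Ly) - (z p - Lz) := by
      simp only [Pi.sub_apply]; ring
    rw [he]
    exact abs_sub_le3 _ _
  have hb1 := h1 q q' (le_trans (le_max_left _ _) hq) (le_trans (le_max_left _ _) hq') m n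
  have hb2 := h2 q q' (le_trans (le_max_right _ _) hq) (le_trans (le_max_right _ _) hq') m n
  linarith

lemma cfNormSet_zero : CfNormSet (0 : ℕ × ℕ → ℂ) = {0} := by
  ext v
  simp only [mem_cfNormSet_iff, Set.mem_singleton_iff]
  constructor
  · rintro ⟨q, q', m, n, rfl⟩
    simp [avg]
  · rintro rfl
    exact ⟨0, 0, 0, 0, by simp [avg]⟩

lemma cfNorm_zero : CfNorm (0 : ℕ × ℕ → ℂ) = 0 := by
  rw [CfNorm, cfNormSet_zero, csSup_singleton]

lemma avg_smul (c : ℂ) (y : ℕ × ℕ → ℂ) (q q' m n : ℕ) :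
    avg (c • y) q q' m n = ‖c‖ * avg y q q' m n := by
  simp only [avg, Pi.smul_apply, smul_eq_mul, norm_mul, ← Finset.mul_sum]
  ring

lemma cfNormSet_smul (c : ℂ) (y : ℕ × ℕ → ℂ) :
    CfNormSet (c • y) = ‖c‖ • CfNormSet y := by
  ext v
  constructor
  · rintro ⟨q, q', m, n, rfl⟩
    exact ⟨avg y q q' m n, avg_mem y q q' m n, (avg_smul c y q q' m n).symm⟩
  · rintro ⟨w, ⟨q, q', m, n, rfl⟩, rfl⟩
    show ‖c‖ • avg y q q' m n ∈ CfNormSet (c • y)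
    rw [smul_eq_mul, ← avg_smul]
    exact avg_mem _ q q' m n

end CfAux
end Aux

open CfAux in
/-- `B[C_f] = {x : B(r,s,t,u)x ∈ [C_f]}` is a Banach space under the norm
`‖x‖ = sup_{q,q',m,n} (1/((q+1)(q'+1))) Σ |(Bx)_{kl}|`. -/
theorem stmt1 (r s t u : ℝ) (hr : r ≠ 0) (hs : s ≠ 0) (ht : t ≠ 0) (hu : u ≠ 0) :
    -- the supremum is finite for every member of B[C_f]
    (∀ x : ℕ × ℕ → ℂ, (∃ L, StronglyAlmostConvTo (Btrans r s t u x) L) →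
      BddAbove (CfNormSet (Btrans r s t u x))) ∧
    -- norm axioms on B[C_f]
    (∀ x : ℕ × ℕ → ℂ, (∃ L, StronglyAlmostConvTo (Btrans r s t u x) L) →
      (CfNorm (Btrans r s t u x) = 0 ↔ x = 0)) ∧
    (∀ x : ℕ × ℕ → ℂ, (∃ L, StronglyAlmostConvTo (Btrans r s t u x) L) →
      0 ≤ CfNorm (Btrans r s t u x)) ∧
    (∀ (c : ℂ) (x : ℕ × ℕ → ℂ), (∃ L, StronglyAlmostConvTo (Btrans r s t u x) L) →
      CfNorm (Btrans r s t u (c • x)) = ‖c‖ * CfNorm (Btrans r s t u x)) ∧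
    (∀ x z : ℕ × ℕ → ℂ, (∃ L, StronglyAlmostConvTo (Btrans r s t u x) L) →
      (∃ L, StronglyAlmostConvTo (Btrans r s t u z) L) →
      CfNorm (Btrans r s t u (x + z)) ≤
        CfNorm (Btrans r s t u x) + CfNorm (Btrans r s t u z)) ∧
    -- completeness: every Cauchy sequence in (B[C_f], ‖·‖) converges in norm to a member of B[C_f]
    (∀ F : ℕ → (ℕ × ℕ → ℂ), (∀ i, ∃ L, StronglyAlmostConvTo (Btrans r s t u (F i)) L) →
      (∀ ε > (0 : ℝ), ∃ N : ℕ, ∀ i j : ℕ, N ≤ i → N ≤ j →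
        CfNorm (Btrans r s t u (F i - F j)) < ε) →
      ∃ x : ℕ × ℕ → ℂ, (∃ L, StronglyAlmostConvTo (Btrans r s t u x) L) ∧
        ∀ ε > (0 : ℝ), ∃ N : ℕ, ∀ i : ℕ, N ≤ i →
          CfNorm (Btrans r s t u (F i - x)) < ε) := by
  refine ⟨?_, ?_, ?_, ?_, ?_, ?_⟩
  · -- BddAbove
    rintro x ⟨L, hL⟩
    exact bddAbove_of_sac hL
  · -- norm = 0 iff x = 0
    rintro x ⟨L, hL⟩
    constructor
    · intro h0
      apply btrans_injective r s t u hr ht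
      funext p
      have hb := bddAbove_of_sac hL
      have h1 : avg (Btrans r s t u x) 0 0 p.1 p.2 ≤ 0 :=
        h0 ▸ avg_le_cfNorm hb 0 0 p.1 p.2
      have h2 := avg_nonneg (Btrans r s t u x) 0 0 p.1 p.2
      have h3 : avg (Btrans r s t u x) 0 0 p.1 p.2 = 0 := le_antisymm h1 h2
      rw [avg_zero_zero] at h3
      have := norm_eq_zero.mp h3
      simpa using this
    · rintro rfl
      rw [btrans_zero, cfNorm_zero]
  · -- nonneg
    rintro x ⟨L, hL⟩
    exact le_trans (avg_nonneg _ 0 0 0 0) (avg_le_cfNorm (bddAbove_of_sac hL) 0 0 0 0)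
  · -- homogeneity
    rintro c x -
    rw [btrans_smul, CfNorm, CfNorm, cfNormSet_smul,
      Real.sSup_smul_of_nonneg (norm_nonneg _), smul_eq_mul]
  · -- triangle
    rintro x z ⟨Lx, hx⟩ ⟨Lz, hz⟩
    rw [btrans_add]
    apply csSup_le (cfNormSet_nonempty _)
    rintro v ⟨q, q', m, n, rfl⟩
    have h1 : avg (Btrans r s t u x + Btrans r s t u z) q q' m n ≤
        avg (Btrans r s t u x) q q' m n + avg (Btrans r s t u z) q q' m n := by
      apply avg_le_add2
      intro p
      simpa [Pi.add_apply] using norm_add_le (Btrans r s t u x p) (Btrans r s t u z p)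
    exact h1.trans (add_le_add (avg_le_cfNorm (bddAbove_of_sac hx) q q' m n)
      (avg_le_cfNorm (bddAbove_of_sac hz) q q' m n))
  · -- completeness
    intro F hSAC hC
    set G : ℕ → ℕ × ℕ → ℂ := fun i => Btrans r s t u (F i) with hG
    choose L hL using hSAC
    have hsub : ∀ i j, Btrans r s t u (F i - F j) = G i - G j := fun i j =>
      btrans_sub r s t u (F i) (F j)
    have hBdd : ∀ i j, BddAbove (CfNormSet (G i - G j)) := fun i j =>
      bddAbove_of_sac (sac_sub (hL i) (hL j))
    have hCG : ∀ ε > (0:ℝ), ∃ N, ∀ i j, N ≤ i → N ≤ j → CfNorm (G i - G j) < ε := by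
      intro ε hε
      obtain ⟨N, hN⟩ := hC ε hε
      exact ⟨N, fun i j hi hj => by rw [← hsub]; exact hN i j hi hj⟩
    have hpt : ∀ p : ℕ × ℕ, ∃ c : ℂ, Filter.Tendsto (fun i => G i p) Filter.atTop (nhds c) := by
      intro p
      apply cauchySeq_tendsto_of_complete
      rw [Metric.cauchySeq_iff]
      intro ε hε
      obtain ⟨N, hN⟩ := hCG ε hε
      refine ⟨N, fun i hi j hj => ?_⟩
      have h1 : avg (G i - G j) 0 0 p.1 p.2 ≤ CfNorm (G i - G j) :=
        avg_le_cfNorm (hBdd i j) 0 0 p.1 p.2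
      rw [avg_zero_zero] at h1
      have h2 : dist (G i p) (G j p) = ‖(G i - G j) (p.1, p.2)‖ := by
        rw [Complex.dist_eq]; simp
      rw [h2]
      exact lt_of_le_of_lt h1 (hN i j hi hj)
    choose g hg using hpt
    have key : ∀ ε > (0:ℝ), ∃ N, ∀ i, N ≤ i → ∀ q q' m n, avg (G i - g) q q' m n ≤ ε := by
      intro ε hε
      obtain ⟨N, hN⟩ := hCG ε hε
      refine ⟨N, fun i hi q q' m n => ?_⟩
      have htend : Filter.Tendsto (fun j => avg (G i - G j) q q' m n) Filter.atTop
          (nhds (avg (G i - g) q q' m n)) := by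
        unfold avg
        apply Filter.Tendsto.const_mul
        apply tendsto_finset_sum
        intro k _
        apply tendsto_finset_sum
        intro l _
        simp only [Pi.sub_apply]
        exact (continuous_norm.tendsto _).comp
          (tendsto_const_nhds.sub (hg (m + k, n + l)))
      refine le_of_tendsto htend (Filter.eventually_atTop.2
        ⟨N, fun j hj => (avg_le_cfNorm (hBdd i j) q q' m n).trans (le_of_lt (hN i j hi hj))⟩)
    have hLC : CauchySeq L := by
      rw [Metric.cauchySeq_iff]
      intro ε hε
      obtain ⟨N, hN⟩ := hCG (ε / 2) (half_pos hε)
      refine ⟨N, fun i hi j hj => ?_⟩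
      obtain ⟨Q, hQ⟩ := (sac_iff _ _).1 (sac_sub (hL i) (hL j)) (ε / 2) (half_pos hε)
      have h1 := hQ Q Q le_rfl le_rfl 0 0
      have h2 : avg (G i - G j) Q Q 0 0 ≤ CfNorm (G i - G j) := avg_le_cfNorm (hBdd i j) Q Q 0 0
      have h3 : ‖L i - L j‖ ≤
          avg (fun p => (G i - G j) p - (L i - L j)) Q Q 0 0 + avg (G i - G j) Q Q 0 0 := by
        rw [← avg_const (L i - L j) Q Q 0 0]
        apply avg_le_add2
        intro p
        have h5 := abs_sub_le3 ((G i - G j) p) ((G i - G j) p - (L i - L j))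
        simp only [sub_sub_cancel] at h5
        linarith
      have h4 := hN i j hi hj
      rw [Complex.dist_eq]
      linarith
    obtain ⟨Lim, hLim⟩ := cauchySeq_tendsto_of_complete hLC
    refine ⟨Bsolve r s t u g, ⟨Lim, ?_⟩, ?_⟩
    · rw [btrans_bsolve r s t u hr ht, sac_iff]
      intro ε hε
      obtain ⟨N1, hN1⟩ := key (ε / 4) (by positivity)
      obtain ⟨N2, hN2⟩ := Metric.tendsto_atTop.1 hLim (ε / 4) (by positivity)
      set i := max N1 N2 with hi
      obtain ⟨Q, hQ⟩ := (sac_iff _ _).1 (hL i) (ε / 4) (by positivity)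
      refine ⟨Q, fun q q' hq hq' m n => ?_⟩
      have h1 : avg (fun p => g p - Lim) q q' m n ≤
          avg (G i - g) q q' m n + avg (fun p => G i p - L i) q q' m n +
            avg (fun _ => L i - Lim) q q' m n := by
        apply avg_le_add3
        intro p
        have h5 := abs_add3 (-((G i - g) p)) (G i p - L i) (L i - Lim)
        have he : -((G i - g) p) + (G i p - L i) + (L i - Lim) = g p - Lim := by
          simp only [Pi.sub_apply]; ring
        rw [he] at h5
        simpa [norm_sub_rev (G i p)] using h5
      have h2 := hN1 i (le_max_left _ _) q q' m n
      have h3 := hQ q q' hq hq' m n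
      have h4 : ‖L i - Lim‖ < ε / 4 := by
        have := hN2 i (le_max_right _ _)
        rwa [Complex.dist_eq] at this
      rw [avg_const] at h1
      linarith
    · intro ε hε
      obtain ⟨N, hN⟩ := key (ε / 2) (half_pos hε)
      refine ⟨N, fun i hi => ?_⟩
      have hBx : Btrans r s t u (F i - Bsolve r s t u g) = G i - g := by
        rw [btrans_sub, btrans_bsolve r s t u hr ht]
      rw [hBx]
      have hle : CfNorm (G i - g) ≤ ε / 2 := by
        apply csSup_le (cfNormSet_nonempty _)
        rintro v ⟨q, q', m, n, rfl⟩
        exact hN i hi q q' m n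
      linarith
end

section
/- Let r, s, t, u be nonzero real numbers. For every double sequence y, the double sequence x defined by x_{mn} = (1/(rt)) Σ_{k=0}^{m} Σ_{l=0}^{n} (−s/r)^{m−k} (−u/t)^{n−l} y_{kl} satisfies (B(r,s,t,u)x)_{mn} = y_{mn} for all m, n ∈ ℕ; moreover x is the unique double sequence with Bx = y, so B(r,s,t,u) is a bijection of the set of all double sequences onto itself. -/
open Finset

lemma Gstep (a : ℂ) (f : ℕ → ℂ) (n : ℕ) :
    ∑ k ∈ range (n + 2), a ^ (n + 1 - k) * f k
      = a * ∑ k ∈ range (n + 1), a ^ (n - k) * f k + f (n + 1) := by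
  rw [Finset.sum_range_succ, Nat.sub_self, pow_zero, one_mul, Finset.mul_sum]
  congr 1
  refine Finset.sum_congr rfl fun k hk => ?_
  rw [Finset.mem_range] at hk
  rw [← mul_assoc, ← pow_succ']
  congr 2
  omega

noncomputable def Sd (a b : ℂ) (y : ℕ × ℕ → ℂ) (m n : ℕ) : ℂ :=
  ∑ k ∈ range (m + 1), ∑ l ∈ range (n + 1), a ^ (m - k) * b ^ (n - l) * y (k, l)

lemma Sd_eq (a b : ℂ) (y : ℕ × ℕ → ℂ) (m n : ℕ) :
    Sd a b y m n = ∑ k ∈ range (m + 1), a ^ (m - k) *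
      ∑ l ∈ range (n + 1), b ^ (n - l) * y (k, l) := by
  unfold Sd
  refine Finset.sum_congr rfl fun k _ => ?_
  rw [Finset.mul_sum]
  exact Finset.sum_congr rfl fun l _ => by ring

lemma Sd_row (a b : ℂ) (y : ℕ × ℕ → ℂ) (m n : ℕ) :
    Sd a b y (m + 1) n = a * Sd a b y m n +
      ∑ l ∈ range (n + 1), b ^ (n - l) * y (m + 1, l) := by
  rw [Sd_eq, Sd_eq, show m + 1 + 1 = m + 2 from rfl, Gstep]

lemma Sd_col (a b : ℂ) (y : ℕ × ℕ → ℂ) (m n : ℕ) :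
    Sd a b y m (n + 1) = b * Sd a b y m n +
      ∑ k ∈ range (m + 1), a ^ (m - k) * y (k, n + 1) := by
  rw [Sd_eq, Sd_eq, Finset.mul_sum, ← Finset.sum_add_distrib]
  refine Finset.sum_congr rfl fun k _ => ?_
  rw [show n + 1 + 1 = n + 2 from rfl, Gstep (f := fun l => y (k, l))]
  ring

lemma Sd_key (a b : ℂ) (y : ℕ × ℕ → ℂ) (m n : ℕ) :
    Sd a b y (m + 1) (n + 1) - a * Sd a b y m (n + 1) - b * Sd a b y (m + 1) n
      + a * b * Sd a b y m n = y (m + 1, n + 1) := by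
  rw [Sd_row a b y m (n + 1), Sd_col a b y m n, Sd_row a b y m n,
    show n + 1 + 1 = n + 2 from rfl, Gstep b (fun l => y (m + 1, l)) n]
  ring

section Aux
variable {r s t u : ℝ}

lemma Binv_eq (r s t u : ℝ) (y : ℕ × ℕ → ℂ) (m n : ℕ) :
    Binv r s t u y (m, n)
      = (1 / (r * t : ℂ)) * Sd ((-s : ℂ) / r) ((-u : ℂ) / t) y m n := rfl

lemma Btrans00 (r s t u : ℝ) (x : ℕ × ℕ → ℂ) :
    Btrans r s t u x (0, 0) = (r * t : ℂ) * x (0, 0) := by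
  simp [Btrans]

lemma Btrans0n (r s t u : ℝ) (x : ℕ × ℕ → ℂ) (n : ℕ) :
    Btrans r s t u x (0, n + 1)
      = (r * u : ℂ) * x (0, n) + (r * t : ℂ) * x (0, n + 1) := by
  simp [Btrans]

lemma Btransm0 (r s t u : ℝ) (x : ℕ × ℕ → ℂ) (m : ℕ) :
    Btrans r s t u x (m + 1, 0)
      = (s * t : ℂ) * x (m, 0) + (r * t : ℂ) * x (m + 1, 0) := by
  simp [Btrans]

lemma Btransmn (r s t u : ℝ) (x : ℕ × ℕ → ℂ) (m n : ℕ) :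
    Btrans r s t u x (m + 1, n + 1)
      = (s * u : ℂ) * x (m, n) + (s * t : ℂ) * x (m, n + 1) +
        (r * u : ℂ) * x (m + 1, n) + (r * t : ℂ) * x (m + 1, n + 1) := by
  simp [Btrans]

lemma alg00 (hr : r ≠ 0) (ht : t ≠ 0) (Y : ℂ) :
    (r * t : ℂ) * ((1 / (r * t : ℂ)) * Y) = Y := by
  have hrc : (r : ℂ) ≠ 0 := Complex.ofReal_ne_zero.mpr hr
  have htc : (t : ℂ) ≠ 0 := Complex.ofReal_ne_zero.mpr ht
  field_simp

lemma alg0n (hr : r ≠ 0) (ht : t ≠ 0) (S Y : ℂ) :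
    (r * u : ℂ) * ((1 / (r * t : ℂ)) * S) +
      (r * t : ℂ) * ((1 / (r * t : ℂ)) * (((-u : ℂ) / t) * S + Y)) = Y := by
  have hrc : (r : ℂ) ≠ 0 := Complex.ofReal_ne_zero.mpr hr
  have htc : (t : ℂ) ≠ 0 := Complex.ofReal_ne_zero.mpr ht
  field_simp
  ring

lemma algm0 (hr : r ≠ 0) (ht : t ≠ 0) (S Y : ℂ) :
    (s * t : ℂ) * ((1 / (r * t : ℂ)) * S) +
      (r * t : ℂ) * ((1 / (r * t : ℂ)) * (((-s : ℂ) / r) * S + Y)) = Y := by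
  have hrc : (r : ℂ) ≠ 0 := Complex.ofReal_ne_zero.mpr hr
  have htc : (t : ℂ) ≠ 0 := Complex.ofReal_ne_zero.mpr ht
  field_simp
  ring

lemma algmn (hr : r ≠ 0) (ht : t ≠ 0) (S00 S01 S10 S11 : ℂ) :
    (s * u : ℂ) * ((1 / (r * t : ℂ)) * S00) + (s * t : ℂ) * ((1 / (r * t : ℂ)) * S01) +
      (r * u : ℂ) * ((1 / (r * t : ℂ)) * S10) + (r * t : ℂ) * ((1 / (r * t : ℂ)) * S11)
      = S11 - ((-s : ℂ) / r) * S01 - ((-u : ℂ) / t) * S10 +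
        ((-s : ℂ) / r) * ((-u : ℂ) / t) * S00 := by
  have hrc : (r : ℂ) ≠ 0 := Complex.ofReal_ne_zero.mpr hr
  have htc : (t : ℂ) ≠ 0 := Complex.ofReal_ne_zero.mpr ht
  field_simp
  ring

lemma Bleft (hr : r ≠ 0) (hs : s ≠ 0) (ht : t ≠ 0) (hu : u ≠ 0) (y : ℕ × ℕ → ℂ) :
    Btrans r s t u (Binv r s t u y) = y := by
  set a : ℂ := (-s : ℂ) / r
  set b : ℂ := (-u : ℂ) / t
  funext p
  obtain ⟨m, n⟩ := p
  match m, n with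
  | 0, 0 =>
    rw [Btrans00, Binv_eq]
    have h : Sd a b y 0 0 = y (0, 0) := by
      simp [Sd]
    rw [h]
    exact alg00 hr ht _
  | 0, n + 1 =>
    rw [Btrans0n, Binv_eq, Binv_eq, Sd_col a b y 0 n]
    have h : ∑ k ∈ range (0 + 1), a ^ (0 - k) * y (k, n + 1) = y (0, n + 1) := by
      simp
    rw [h]
    exact alg0n hr ht _ _
  | m + 1, 0 =>
    rw [Btransm0, Binv_eq, Binv_eq, Sd_row a b y m 0]
    have h : ∑ l ∈ range (0 + 1), b ^ (0 - l) * y (m + 1, l) = y (m + 1, 0) := by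
      simp
    rw [h]
    exact algm0 hr ht _ _
  | m + 1, n + 1 =>
    rw [Btransmn, Binv_eq, Binv_eq, Binv_eq, Binv_eq, algmn hr ht, Sd_key]

lemma Binj (hr : r ≠ 0) (ht : t ≠ 0) {x x' : ℕ × ℕ → ℂ}
    (h : Btrans r s t u x = Btrans r s t u x') : x = x' := by
  have hc : (r * t : ℂ) ≠ 0 :=
    mul_ne_zero (Complex.ofReal_ne_zero.mpr hr) (Complex.ofReal_ne_zero.mpr ht)
  have key : ∀ m n, x (m, n) = x' (m, n) := by
    intro m
    induction m with
    | zero =>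
      intro n
      induction n with
      | zero =>
        have h0 := congrFun h (0, 0)
        rw [Btrans00, Btrans00] at h0
        exact mul_left_cancel₀ hc h0
      | succ n ihn =>
        have h0 := congrFun h (0, n + 1)
        rw [Btrans0n, Btrans0n, ihn] at h0
        exact mul_left_cancel₀ hc (by linear_combination h0)
    | succ m ihm =>
      intro n
      induction n with
      | zero =>
        have h0 := congrFun h (m + 1, 0)
        rw [Btransm0, Btransm0, ihm 0] at h0
        exact mul_left_cancel₀ hc (by linear_combination h0)
      | succ n ihn =>
        have h0 := congrFun h (m + 1, n + 1)
        rw [Btransmn, Btransmn, ihm n, ihm (n + 1), ihn] at h0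
        exact mul_left_cancel₀ hc (by linear_combination h0)
  funext p
  obtain ⟨m, n⟩ := p
  exact key m n

end Aux

/-- For every double sequence `y`, the sequence
`x_{mn} = (1/(rt)) Σ_{k=0}^{m} Σ_{l=0}^{n} (−s/r)^{m−k} (−u/t)^{n−l} y_{kl}` satisfies
`B(r,s,t,u)x = y`, it is the unique such sequence, and `B(r,s,t,u)` is a bijection. -/
theorem stmt3 (r s t u : ℝ) (hr : r ≠ 0) (hs : s ≠ 0) (ht : t ≠ 0) (hu : u ≠ 0) :
    (∀ y : ℕ × ℕ → ℂ, Btrans r s t u (Binv r s t u y) = y) ∧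
    (∀ y x : ℕ × ℕ → ℂ, Btrans r s t u x = y → x = Binv r s t u y) ∧
    Function.Bijective (Btrans r s t u) := by
  refine ⟨Bleft hr hs ht hu, fun y x hx => ?_,
    fun x x' => Binj hr ht, fun y => ⟨Binv r s t u y, Bleft hr hs ht hu y⟩⟩
  exact Binj hr ht (hx.trans (Bleft hr hs ht hu y).symm)
end

section
/- Let r, t be nonzero real numbers and set s = −r, u = −t. Then every bounded double sequence x belongs to B(C_{f0}); that is, if sup_{m,n} |x_{mn}| < ∞ then B(r,−r,t,−t)x is almost null (almost convergent to 0). -/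
open Finset

/-- If `s = −r`, `u = −t`, then every bounded double sequence `x`
belongs to `B(C_{f0})`: `B(r,−r,t,−t)x` is almost null. -/
theorem stmt4 (r t : ℝ) (hr : r ≠ 0) (ht : t ≠ 0) (x : ℕ × ℕ → ℂ)
    (hx : ∃ M : ℝ, ∀ m n : ℕ, ‖x (m, n)‖ ≤ M) :
    AlmostConvTo (Btrans r (-r) t (-t) x) 0 := by
  obtain ⟨M, hM⟩ := hx
  have hM0 : 0 ≤ M := le_trans (norm_nonneg _) (hM 0 0)
  set h : ℕ → ℕ → ℂ := fun a b => if a = 0 ∨ b = 0 then 0 else x (a - 1, b - 1) with hh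
  have hb : ∀ a b, ‖h a b‖ ≤ M := by
    intro a b
    simp only [hh]
    split
    · simpa using hM0
    · exact hM _ _
  have key : ∀ p : ℕ × ℕ, Btrans r (-r) t (-t) x p =
      ((r : ℂ) * t) * (h (p.1 + 1) (p.2 + 1) - h p.1 (p.2 + 1) - h (p.1 + 1) p.2 + h p.1 p.2) := by
    rintro ⟨a, b⟩
    by_cases h1 : a = 0 <;> by_cases h2 : b = 0 <;>
      simp [Btrans, hh, h1, h2] <;> push_cast <;> ring
  have sumeq : ∀ q q' m n : ℕ,
      (∑ k ∈ Finset.range (q + 1), ∑ l ∈ Finset.range (q' + 1),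
        Btrans r (-r) t (-t) x (m + k, n + l)) =
      ((r : ℂ) * t) * ((h (m + q + 1) (n + q' + 1) - h (m + q + 1) n) -
        (h m (n + q' + 1) - h m n)) := by
    intro q q' m n
    have inner : ∀ a : ℕ, (∑ l ∈ Finset.range (q' + 1),
        (h (a + 1) (n + l + 1) - h a (n + l + 1) - h (a + 1) (n + l) + h a (n + l))) =
        (h (a + 1) (n + q' + 1) - h a (n + q' + 1)) - (h (a + 1) n - h a n) := by
      intro a
      have := Finset.sum_range_sub (fun l => h (a + 1) (n + l) - h a (n + l)) (q' + 1)
      simp only [add_zero, ← add_assoc] at this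
      rw [← this]
      apply Finset.sum_congr rfl
      intro l _
      ring
    calc (∑ k ∈ Finset.range (q + 1), ∑ l ∈ Finset.range (q' + 1),
        Btrans r (-r) t (-t) x (m + k, n + l))
        = ((r : ℂ) * t) * ∑ k ∈ Finset.range (q + 1), ∑ l ∈ Finset.range (q' + 1),
            (h (m + k + 1) (n + l + 1) - h (m + k) (n + l + 1)
              - h (m + k + 1) (n + l) + h (m + k) (n + l)) := by
          rw [Finset.mul_sum]
          apply Finset.sum_congr rfl
          intro k _
          rw [Finset.mul_sum]
          exact Finset.sum_congr rfl fun l _ => key (m + k, n + l)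
      _ = ((r : ℂ) * t) * ∑ k ∈ Finset.range (q + 1),
            ((h (m + k + 1) (n + q' + 1) - h (m + k + 1) n)
              - (h (m + k) (n + q' + 1) - h (m + k) n)) := by
          congr 1
          apply Finset.sum_congr rfl
          intro k _
          rw [inner (m + k)]
          ring
      _ = ((r : ℂ) * t) * ((h (m + q + 1) (n + q' + 1) - h (m + q + 1) n) -
            (h m (n + q' + 1) - h m n)) := by
          congr 1
          have := Finset.sum_range_sub
            (fun k => h (m + k) (n + q' + 1) - h (m + k) n) (q + 1)
          simp only [add_zero, ← add_assoc] at this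
          rw [← this]
  intro ε hε
  set K : ℝ := ‖(r : ℂ) * t‖ * (4 * M) with hK
  have hK0 : 0 ≤ K := mul_nonneg (norm_nonneg _) (by linarith)
  obtain ⟨Q, hQ⟩ := exists_nat_gt (K / ε)
  refine ⟨Q, fun q q' hq hq' m n => ?_⟩
  have habsS : ‖(∑ k ∈ Finset.range (q + 1), ∑ l ∈ Finset.range (q' + 1),
      Btrans r (-r) t (-t) x (m + k, n + l))‖ ≤ K := by
    rw [sumeq q q' m n, norm_mul]
    rw [hK]
    apply mul_le_mul_of_nonneg_left _ (norm_nonneg _)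
    calc ‖(h (m + q + 1) (n + q' + 1) - h (m + q + 1) n) -
            (h m (n + q' + 1) - h m n)‖
        ≤ ‖h (m + q + 1) (n + q' + 1) - h (m + q + 1) n‖
          + ‖h m (n + q' + 1) - h m n‖ := norm_sub_le _ _
      _ ≤ (‖h (m + q + 1) (n + q' + 1)‖ + ‖h (m + q + 1) n‖)
          + (‖h m (n + q' + 1)‖ + ‖h m n‖) :=
            add_le_add (norm_sub_le _ _) (norm_sub_le _ _)
      _ ≤ (M + M) + (M + M) := by
            exact add_le_add (add_le_add (hb _ _) (hb _ _)) (add_le_add (hb _ _) (hb _ _))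
      _ = 4 * M := by ring
  have hden : (0 : ℝ) < ((q : ℝ) + 1) * ((q' : ℝ) + 1) := by positivity
  have habs1 : ‖(1 : ℂ) / (((q : ℂ) + 1) * ((q' : ℂ) + 1))‖
      = 1 / (((q : ℝ) + 1) * ((q' : ℝ) + 1)) := by
    have e : (1 : ℂ) / (((q : ℂ) + 1) * ((q' : ℂ) + 1))
        = ((1 / (((q : ℝ) + 1) * ((q' : ℝ) + 1)) : ℝ) : ℂ) := by
      push_cast; ring
    rw [e, Complex.norm_real, Real.norm_eq_abs, abs_of_pos (by positivity)]
  rw [sub_zero, norm_mul, habs1]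
  have hKlt : K < ε * (((q : ℝ) + 1) * ((q' : ℝ) + 1)) := by
    have h1 : K < ε * Q := by
      rw [div_lt_iff₀ hε] at hQ
      linarith [hQ]
    have h2 : (Q : ℝ) ≤ ((q : ℝ) + 1) * ((q' : ℝ) + 1) := by
      have hq1 : (Q : ℝ) ≤ (q : ℝ) := by exact_mod_cast hq
      have hq2 : (Q : ℝ) ≤ (q' : ℝ) := by exact_mod_cast hq'
      nlinarith
    nlinarith
  calc 1 / (((q : ℝ) + 1) * ((q' : ℝ) + 1)) *
        ‖∑ k ∈ Finset.range (q + 1), ∑ l ∈ Finset.range (q' + 1),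
          Btrans r (-r) t (-t) x (m + k, n + l)‖
      ≤ 1 / (((q : ℝ) + 1) * ((q' : ℝ) + 1)) * K := by
        apply mul_le_mul_of_nonneg_left habsS
        positivity
    _ < ε := by
        rw [div_mul_eq_mul_div, one_mul, div_lt_iff₀ hden]
        linarith [hKlt]
end

section
/- Let r, t be nonzero real numbers and set s = −r, u = −t. The double sequence x given by x_{kl} = k/(rt) for all k, l ∈ ℕ belongs to B[C_{f0}] (so that B(r,−r,t,−t)x is strongly almost null) but x is unbounded; in particular the inclusions M_u ⊆ B(C_{f0}) and [C_{f0}] ⊆ B[C_{f0}] are strict. -/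
open Finset

section AuxStmt5
open Finset

private lemma tele1 (f : ℕ → ℂ) (n q : ℕ) :
    ∑ l ∈ range (q+1), (f (n+l) - (if n+l = 0 then 0 else f (n+l-1)))
      = f (n+q) - (if n = 0 then 0 else f (n-1)) := by
  induction q with
  | zero => simp
  | succ q ih =>
    rw [Finset.sum_range_succ, ih, if_neg (by omega : ¬ n + (q+1) = 0)]
    have h2 : n + (q+1) - 1 = n + q := by omega
    rw [h2]; ring

private lemma shift_le (h : ℕ → ℝ) (hh : ∀ j, 0 ≤ h j) (m q : ℕ) :
    ∑ k ∈ range (q+1), (if m+k = 0 then 0 else h (m+k-1)) ≤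
      ∑ k ∈ range (q+1), h (m-1+k) := by
  rcases Nat.eq_zero_or_pos m with hm | hm
  · subst hm
    rw [Finset.sum_range_succ' (fun k => if 0+k = 0 then (0:ℝ) else h (0+k-1))]
    simp only [Nat.zero_add]
    have h1 : ∀ i ∈ range q, (if i+1 = 0 then (0:ℝ) else h (i+1-1)) = h i := by
      intro i _; rw [if_neg (by omega)]; congr 1
    rw [Finset.sum_congr rfl h1, if_pos trivial, add_zero, Finset.sum_range_succ]
    calc ∑ i ∈ range q, h i ≤ ∑ i ∈ range q, h i + h (0 - 1 + q) := le_add_of_nonneg_right (hh _)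
    _ = _ := by
      congr 1; exact (Finset.sum_congr rfl (fun k hk => by congr 1; omega)).symm
  · apply le_of_eq
    apply Finset.sum_congr rfl; intro k _
    rw [if_neg (by omega)]; congr 1; omega

private lemma Bx_eq (r t : ℝ) (hr : r ≠ 0) (ht : t ≠ 0) :
    Btrans r (-r) t (-t) (fun p => (p.1 : ℂ) / (r * t : ℂ)) =
      fun p => if p.2 = 0 ∧ p.1 ≠ 0 then 1 else 0 := by
  have hrt : (r : ℂ) * t ≠ 0 := by
    simp [Complex.ofReal_ne_zero, hr, ht]
  funext p
  obtain ⟨m, n⟩ := p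
  simp only [Btrans]
  match m, n with
  | 0, 0 => simp
  | 0, n+1 => simp
  | m+1, 0 =>
    have h1 : ¬ ((m:ℕ) + 1 = 0) := by omega
    simp only [Nat.add_sub_cancel, h1, or_true, if_true, if_false, ite_true, ite_false,
      true_and, eq_self_iff_true, ne_eq, not_false_eq_true]
    push_cast
    field_simp
    rw [div_eq_one_iff_eq hrt]; ring
  | m+1, n+1 =>
    have h1 : ¬ ((m:ℕ) + 1 = 0) := by omega
    have h2 : ¬ ((n:ℕ) + 1 = 0) := by omega
    simp only [Nat.add_sub_cancel, h1, h2, or_self, if_false, ite_false, false_and,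
      eq_self_iff_true, ne_eq, not_false_eq_true, or_false, false_or]
    push_cast
    field_simp
    ring


private lemma indicator_sanull :
    StronglyAlmostConvTo (fun p => if p.2 = 0 ∧ p.1 ≠ 0 then 1 else 0) 0 := by
  intro ε hε
  obtain ⟨Q, hQ⟩ := exists_nat_gt (1/ε)
  refine ⟨Q, fun q q' hq hq' m n => ?_⟩
  have hq1 : (0:ℝ) < (q:ℝ)+1 := by positivity
  have hq'1 : (0:ℝ) < (q':ℝ)+1 := by positivity
  have hsum : ∑ k ∈ range (q+1), ∑ l ∈ range (q'+1),
      ‖(if (n+l = 0 ∧ m+k ≠ 0) then (1:ℂ) else 0) - 0‖ ≤ (q:ℝ)+1 := by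
    have hinner : ∀ k, ∑ l ∈ range (q'+1),
        ‖(if (n+l = 0 ∧ m+k ≠ 0) then (1:ℂ) else 0) - 0‖ ≤ 1 := by
      intro k
      calc ∑ l ∈ range (q'+1),
            ‖(if (n+l = 0 ∧ m+k ≠ 0) then (1:ℂ) else 0) - 0‖
          ≤ ∑ l ∈ range (q'+1), (if l = 0 then (1:ℝ) else 0) := by
            apply Finset.sum_le_sum; intro l _
            by_cases hc : n+l = 0 ∧ m+k ≠ 0
            · rw [if_pos hc, if_pos (by omega : l = 0)]; simp
            · rw [if_neg hc]; split_ifs <;> simp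
        _ = 1 := by rw [Finset.sum_ite_eq' (range (q'+1)) 0 (fun _ => (1:ℝ))]
                     <;> simp
    calc ∑ k ∈ range (q+1), ∑ l ∈ range (q'+1),
          ‖(if (n+l = 0 ∧ m+k ≠ 0) then (1:ℂ) else 0) - 0‖
        ≤ ∑ k ∈ range (q+1), (1:ℝ) := Finset.sum_le_sum (fun k _ => hinner k)
      _ = (q:ℝ)+1 := by simp
  have hkey : 1/((q':ℝ)+1) < ε := by
    have h5 : 1/ε < (q':ℝ)+1 := by
      refine hQ.trans_le ?_
      have : (Q:ℝ) ≤ (q':ℝ) := by exact_mod_cast hq'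
      linarith
    rw [div_lt_iff₀ hε] at h5
    rw [div_lt_iff₀ hq'1]
    nlinarith
  calc (1 / (((q : ℝ) + 1) * ((q' : ℝ) + 1))) *
      ∑ k ∈ Finset.range (q + 1), ∑ l ∈ Finset.range (q' + 1),
        ‖(if (n+l = 0 ∧ m+k ≠ 0) then (1:ℂ) else 0) - 0‖
      ≤ (1 / (((q : ℝ) + 1) * ((q' : ℝ) + 1))) * ((q:ℝ)+1) := by
        apply mul_le_mul_of_nonneg_left hsum; positivity
    _ = 1/((q':ℝ)+1) := by field_simp
    _ < ε := hkey

private lemma strong_to_almost (y : ℕ × ℕ → ℂ) (h : StronglyAlmostConvTo y 0) :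
    AlmostConvTo y 0 := by
  intro ε hε
  obtain ⟨Q, hQ⟩ := h ε hε
  refine ⟨Q, fun q q' hq hq' m n => ?_⟩
  refine lt_of_le_of_lt ?_ (hQ q q' hq hq' m n)
  rw [sub_zero, norm_mul]
  have hc : ‖1 / (((q:ℂ)+1)*((q':ℂ)+1))‖
      = 1 / (((q : ℝ) + 1) * ((q' : ℝ) + 1)) := by
    rw [norm_div, norm_one, norm_mul]
    congr 1
    have e1 : ((q:ℂ)+1) = ((q+1 : ℕ) : ℂ) := by push_cast; ring
    have e2 : ((q':ℂ)+1) = ((q'+1 : ℕ) : ℂ) := by push_cast; ring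
    rw [e1, e2, Complex.norm_natCast, Complex.norm_natCast]
    push_cast; ring
  rw [hc]
  apply mul_le_mul_of_nonneg_left _ (by positivity)
  calc ‖∑ k ∈ range (q+1), ∑ l ∈ range (q'+1), y (m+k, n+l)‖
      ≤ ∑ k ∈ range (q+1), ‖∑ l ∈ range (q'+1), y (m+k, n+l)‖ :=
        norm_sum_le _ _
    _ ≤ ∑ k ∈ range (q+1), ∑ l ∈ range (q'+1), ‖y (m+k, n+l) - 0‖ := by
        apply Finset.sum_le_sum; intro k _
        simpa [sub_zero] using norm_sum_le (range (q'+1)) (fun l => y (m+k, n+l))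
private lemma Bform (r t : ℝ) (x : ℕ × ℕ → ℂ) (k l : ℕ) :
    Btrans r (-r) t (-t) x (k, l) =
      (r*t : ℂ) * ((x (k, l) - (if k = 0 then 0 else x (k-1, l))) -
        (if l = 0 then 0 else x (k, l-1) - (if k = 0 then 0 else x (k-1, l-1)))) := by
  simp only [Btrans]
  match k, l with
  | 0, 0 => push_cast; ring_nf; simp
  | 0, l+1 =>
    have h2 : ¬ ((l:ℕ) + 1 = 0) := by omega
    simp only [Nat.add_sub_cancel, h2, if_false, ite_false, if_pos rfl, true_or, if_true,
      ite_true, false_or, eq_self_iff_true]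
    push_cast; ring
  | k+1, 0 =>
    have h1 : ¬ ((k:ℕ) + 1 = 0) := by omega
    simp only [Nat.add_sub_cancel, h1, if_false, ite_false, or_true, if_true, ite_true,
      eq_self_iff_true]
    push_cast; ring
  | k+1, l+1 =>
    have h1 : ¬ ((k:ℕ) + 1 = 0) := by omega
    have h2 : ¬ ((l:ℕ) + 1 = 0) := by omega
    simp only [Nat.add_sub_cancel, h1, h2, if_false, ite_false, or_self, false_or, or_false]
    push_cast; ring

private lemma bdd_to_almost (r t : ℝ) (hr : r ≠ 0) (ht : t ≠ 0) (x : ℕ × ℕ → ℂ)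
    (M : ℝ) (hM : ∀ m n : ℕ, ‖x (m, n)‖ ≤ M) :
    AlmostConvTo (Btrans r (-r) t (-t) x) 0 := by
  have hM0 : 0 ≤ M := le_trans (norm_nonneg _) (hM 0 0)
  have habs : ∀ k l : ℕ, ‖x (k, l)‖ ≤ M := hM
  intro ε hε
  obtain ⟨Q, hQ⟩ := exists_nat_gt (4 * M * |r*t| / ε)
  refine ⟨Q, fun q q' hq hq' m n => ?_⟩
  set D1 : ℕ → ℕ → ℂ := fun k l => x (k, l) - (if k = 0 then 0 else x (k-1, l)) with hD1
  have hD1bd : ∀ k l, ‖D1 k l‖ ≤ 2*M := by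
    intro k l
    refine le_trans (norm_sub_le _ _) ?_
    have h1 : ‖if k = 0 then (0:ℂ) else x (k-1, l)‖ ≤ M := by
      split_ifs <;> simp [hM, hM0]
    linarith [hM k l]
  -- inner telescoping in l
  have hsum : ∑ k ∈ range (q+1), ∑ l ∈ range (q'+1), Btrans r (-r) t (-t) x (m+k, n+l)
      = (r*t : ℂ) * ((∑ k ∈ range (q+1), D1 (m+k) (n+q')) -
          (if n = 0 then 0 else ∑ k ∈ range (q+1), D1 (m+k) (n-1))) := by
    have hin : ∀ k, ∑ l ∈ range (q'+1), Btrans r (-r) t (-t) x (m+k, n+l)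
        = (r*t : ℂ) * (D1 (m+k) (n+q') - (if n = 0 then 0 else D1 (m+k) (n-1))) := by
      intro k
      have : ∀ l, Btrans r (-r) t (-t) x (m+k, n+l) =
          (r*t : ℂ) * (D1 (m+k) (n+l) - (if n+l = 0 then 0 else D1 (m+k) (n+l-1))) := by
        intro l
        rw [Bform]
      rw [Finset.sum_congr rfl (fun l _ => this l), ← Finset.mul_sum,
        tele1 (fun j => D1 (m+k) j) n q']
    rw [Finset.sum_congr rfl (fun k _ => hin k), ← Finset.mul_sum]
    congr 1
    rw [Finset.sum_sub_distrib]
    congr 1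
    split_ifs <;> simp
  have htele2 : ∀ L : ℕ, ∑ k ∈ range (q+1), D1 (m+k) L
      = x (m+q, L) - (if m = 0 then 0 else x (m-1, L)) := by
    intro L
    exact tele1 (fun j => x (j, L)) m q
  have hSbd : ‖∑ k ∈ range (q+1), ∑ l ∈ range (q'+1),
      Btrans r (-r) t (-t) x (m+k, n+l)‖ ≤ |r*t| * (4*M) := by
    rw [hsum, norm_mul]
    have hcoef : ‖(r:ℂ)*t‖ = |r*t| := by
      rw [norm_mul, Complex.norm_real, Real.norm_eq_abs, Complex.norm_real, Real.norm_eq_abs, abs_mul]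
    rw [hcoef]
    apply mul_le_mul_of_nonneg_left _ (abs_nonneg _)
    refine le_trans (norm_sub_le _ _) ?_
    have h1 : ‖∑ k ∈ range (q+1), D1 (m+k) (n+q')‖ ≤ 2*M := by
      rw [htele2]
      refine le_trans (norm_sub_le _ _) ?_
      have : ‖if m = 0 then (0:ℂ) else x (m-1, n+q')‖ ≤ M := by
        split_ifs <;> simp [hM, hM0]
      linarith [hM (m+q) (n+q')]
    have h2 : ‖if n = 0 then (0:ℂ)
        else ∑ k ∈ range (q+1), D1 (m+k) (n-1)‖ ≤ 2*M := by
      split_ifs with hn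
      · simp; linarith
      · rw [htele2]
        refine le_trans (norm_sub_le _ _) ?_
        have : ‖if m = 0 then (0:ℂ) else x (m-1, n-1)‖ ≤ M := by
          split_ifs <;> simp [hM, hM0]
        linarith [hM (m+q) (n-1)]
    linarith
  rw [sub_zero, norm_mul]
  have hc : ‖1 / (((q:ℂ)+1)*((q':ℂ)+1))‖
      = 1 / (((q : ℝ) + 1) * ((q' : ℝ) + 1)) := by
    rw [norm_div, norm_one, norm_mul]
    congr 1
    have e1 : ((q:ℂ)+1) = ((q+1 : ℕ) : ℂ) := by push_cast; ring
    have e2 : ((q':ℂ)+1) = ((q'+1 : ℕ) : ℂ) := by push_cast; ring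
    rw [e1, e2, Complex.norm_natCast, Complex.norm_natCast]
    push_cast; ring
  rw [hc]
  have hq1 : (0:ℝ) < (q:ℝ)+1 := by positivity
  have hq'1 : (0:ℝ) < (q':ℝ)+1 := by positivity
  calc (1 / (((q : ℝ) + 1) * ((q' : ℝ) + 1))) * ‖∑ k ∈ range (q+1),
        ∑ l ∈ range (q'+1), Btrans r (-r) t (-t) x (m+k, n+l)‖
      ≤ (1 / (((q : ℝ) + 1) * ((q' : ℝ) + 1))) * (|r*t| * (4*M)) := by
        apply mul_le_mul_of_nonneg_left hSbd; positivity
    _ ≤ (1 / ((Q : ℝ) + 1)) * (|r*t| * (4*M)) := by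
        apply mul_le_mul_of_nonneg_right _ (by positivity)
        rw [div_le_div_iff₀ (by positivity) (by positivity)]
        have hqQ : (Q:ℝ) ≤ q := by exact_mod_cast hq
        nlinarith
    _ < ε := by
        rw [div_lt_iff₀ hε] at hQ
        have hQ1 : (0:ℝ) < (Q:ℝ)+1 := by positivity
        rw [div_mul_eq_mul_div, div_lt_iff₀ hQ1]
        nlinarith
private lemma strong_B (r t : ℝ) (hr : r ≠ 0) (ht : t ≠ 0) (x : ℕ × ℕ → ℂ)
    (hx : StronglyAlmostConvTo x 0) :
    StronglyAlmostConvTo (Btrans r (-r) t (-t) x) 0 := by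
  have hrt : (0:ℝ) < |r*t| := abs_pos.2 (mul_ne_zero hr ht)
  intro ε hε
  have hε4 : 0 < ε / (4*|r*t|) := by positivity
  obtain ⟨Q, hQ⟩ := hx _ hε4
  refine ⟨Q, fun q q' hq hq' m n => ?_⟩
  have hcoef : ∀ (a b : ℝ), ‖(a:ℂ)*(b:ℂ)‖ = |a| * |b| := by
    intro a b; rw [norm_mul, Complex.norm_real, Real.norm_eq_abs, Complex.norm_real, Real.norm_eq_abs]
  have hite : ∀ (c : Prop) [Decidable c] (z : ℂ),
      ‖if c then 0 else z‖ = if c then 0 else ‖z‖ := by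
    intro c _ z; split_ifs <;> simp
  have hpt : ∀ a b : ℕ, ‖Btrans r (-r) t (-t) x (a, b) - 0‖ ≤
      |r*t| * ((if a = 0 ∨ b = 0 then 0 else ‖x (a-1, b-1)‖)
        + ((if a = 0 then 0 else ‖x (a-1, b)‖)
        + ((if b = 0 then 0 else ‖x (a, b-1)‖)
        + ‖x (a, b)‖))) := by
    intro a b
    rw [sub_zero]
    simp only [Btrans]
    set w1 : ℂ := ((-r:ℝ):ℂ) * ((-t:ℝ):ℂ) * (if a = 0 ∨ b = 0 then 0 else x (a-1, b-1))
    set w2 : ℂ := ((-r:ℝ):ℂ) * ((t:ℝ):ℂ) * (if a = 0 then 0 else x (a-1, b))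
    set w3 : ℂ := ((r:ℝ):ℂ) * ((-t:ℝ):ℂ) * (if b = 0 then 0 else x (a, b-1))
    set w4 : ℂ := ((r:ℝ):ℂ) * ((t:ℝ):ℂ) * x (a, b)
    have tri : ‖w1 + w2 + w3 + w4‖ ≤
        ‖w1‖ + ‖w2‖ + ‖w3‖ + ‖w4‖ := by
      calc ‖w1 + w2 + w3 + w4‖
          ≤ ‖w1 + w2 + w3‖ + ‖w4‖ := norm_add_le _ _
        _ ≤ ‖w1 + w2‖ + ‖w3‖ + ‖w4‖ := by
            linarith [norm_add_le (w1 + w2) w3]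
        _ ≤ _ := by linarith [norm_add_le w1 w2]
    refine le_trans tri (le_of_eq ?_)
    have e1 : ‖w1‖ = |r*t| *
        (if a = 0 ∨ b = 0 then 0 else ‖x (a-1, b-1)‖) := by
      rw [norm_mul, hcoef, hite]
      rw [abs_neg, abs_neg, ← abs_mul]
    have e2 : ‖w2‖ = |r*t| * (if a = 0 then 0 else ‖x (a-1, b)‖) := by
      rw [norm_mul, hcoef, hite, abs_neg, ← abs_mul]
    have e3 : ‖w3‖ = |r*t| * (if b = 0 then 0 else ‖x (a, b-1)‖) := by
      rw [norm_mul, hcoef, hite, abs_neg, ← abs_mul]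
    have e4 : ‖w4‖ = |r*t| * ‖x (a, b)‖ := by
      rw [norm_mul, hcoef, ← abs_mul]
    rw [e1, e2, e3, e4]; ring
  set c : ℝ := 1 / (((q : ℝ) + 1) * ((q' : ℝ) + 1)) with hc
  have hc0 : 0 < c := by rw [hc]; positivity
  -- the four shifted averages
  have hQ' : ∀ m' n' : ℕ, c * (∑ k ∈ range (q+1), ∑ l ∈ range (q'+1),
      ‖x (m'+k, n'+l)‖) < ε / (4*|r*t|) := by
    intro m' n'
    have h := hQ q q' hq hq' m' n'
    simp only [sub_zero] at h
    rw [← hc] at h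
    exact h
  have hD : c * (∑ k ∈ range (q+1), ∑ l ∈ range (q'+1),
      ‖x (m+k, n+l)‖) < ε / (4*|r*t|) := hQ' m n
  have hB : c * (∑ k ∈ range (q+1), ∑ l ∈ range (q'+1),
      (if m+k = 0 then 0 else ‖x (m+k-1, n+l)‖)) < ε / (4*|r*t|) := by
    refine lt_of_le_of_lt ?_ (hQ' (m-1) n)
    apply mul_le_mul_of_nonneg_left _ (le_of_lt hc0)
    have := shift_le (fun j => ∑ l ∈ range (q'+1), ‖x (j, n+l)‖)
      (fun j => Finset.sum_nonneg (fun l _ => norm_nonneg _)) m q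
    refine le_trans (le_of_eq ?_) this
    apply Finset.sum_congr rfl; intro k _
    split_ifs <;> simp
  have hC : c * (∑ k ∈ range (q+1), ∑ l ∈ range (q'+1),
      (if n+l = 0 then 0 else ‖x (m+k, n+l-1)‖)) < ε / (4*|r*t|) := by
    refine lt_of_le_of_lt ?_ (hQ' m (n-1))
    apply mul_le_mul_of_nonneg_left _ (le_of_lt hc0)
    apply Finset.sum_le_sum; intro k _
    exact shift_le (fun j => ‖x (m+k, j)‖) (fun j => norm_nonneg _) n q'
  have hA : c * (∑ k ∈ range (q+1), ∑ l ∈ range (q'+1),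
      (if m+k = 0 ∨ n+l = 0 then 0 else ‖x (m+k-1, n+l-1)‖)) < ε / (4*|r*t|) := by
    refine lt_of_le_of_lt ?_ (hQ' (m-1) (n-1))
    apply mul_le_mul_of_nonneg_left _ (le_of_lt hc0)
    have step1 : ∀ k, ∑ l ∈ range (q'+1),
        (if m+k = 0 ∨ n+l = 0 then 0 else ‖x (m+k-1, n+l-1)‖)
        ≤ (if m+k = 0 then 0 else ∑ l ∈ range (q'+1), ‖x (m+k-1, n-1+l)‖) := by
      intro k
      by_cases hk : m+k = 0
      · rw [if_pos hk]
        apply le_of_eq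
        apply Finset.sum_eq_zero; intro l _
        rw [if_pos (Or.inl hk)]
      · rw [if_neg hk]
        refine le_trans (le_of_eq ?_)
          (shift_le (fun j => ‖x (m+k-1, j)‖) (fun j => norm_nonneg _) n q')
        apply Finset.sum_congr rfl; intro l _
        by_cases hl : n+l = 0
        · rw [if_pos (Or.inr hl), if_pos hl]
        · rw [if_neg (by tauto), if_neg hl]
    refine le_trans (Finset.sum_le_sum (fun k _ => step1 k)) ?_
    exact shift_le (fun j => ∑ l ∈ range (q'+1), ‖x (j, n-1+l)‖)
      (fun j => Finset.sum_nonneg (fun l _ => norm_nonneg _)) m q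
  -- combine
  set SA := ∑ k ∈ range (q+1), ∑ l ∈ range (q'+1),
      (if m+k = 0 ∨ n+l = 0 then 0 else ‖x (m+k-1, n+l-1)‖) with hSA
  set SB := ∑ k ∈ range (q+1), ∑ l ∈ range (q'+1),
      (if m+k = 0 then 0 else ‖x (m+k-1, n+l)‖) with hSB
  set SC := ∑ k ∈ range (q+1), ∑ l ∈ range (q'+1),
      (if n+l = 0 then 0 else ‖x (m+k, n+l-1)‖) with hSC
  set SD := ∑ k ∈ range (q+1), ∑ l ∈ range (q'+1), ‖x (m+k, n+l)‖ with hSD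
  have hS2 : ∑ k ∈ range (q+1), ∑ l ∈ range (q'+1),
      ‖Btrans r (-r) t (-t) x (m+k, n+l) - 0‖
      ≤ |r*t| * (SA + (SB + (SC + SD))) := by
    refine le_trans (Finset.sum_le_sum (fun k _ =>
      Finset.sum_le_sum (fun l _ => hpt (m+k) (n+l)))) (le_of_eq ?_)
    rw [hSA, hSB, hSC, hSD]
    simp only [mul_add, Finset.sum_add_distrib, Finset.mul_sum]
  have e4 : |r*t| * (4 * (ε / (4*|r*t|))) = ε := by field_simp
  have h5 : c * (SA + (SB + (SC + SD))) < 4 * (ε / (4*|r*t|)) := by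
    have e1 : c * (SA + (SB + (SC + SD))) = c*SA + (c*SB + (c*SC + c*SD)) := by ring
    rw [e1]; linarith
  calc c * ∑ k ∈ range (q+1), ∑ l ∈ range (q'+1),
        ‖Btrans r (-r) t (-t) x (m+k, n+l) - 0‖
      ≤ c * (|r*t| * (SA + (SB + (SC + SD)))) :=
        mul_le_mul_of_nonneg_left hS2 hc0.le
    _ = |r*t| * (c * (SA + (SB + (SC + SD)))) := by ring
    _ < |r*t| * (4 * (ε / (4*|r*t|))) := by
        exact mul_lt_mul_of_pos_left h5 hrt
    _ = ε := e4
end AuxStmt5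

set_option maxHeartbeats 1000000 in
/-- With `s = −r`, `u = −t`, the sequence `x_{kl} = k/(rt)` lies in
`B[C_{f0}]` but is unbounded; hence the inclusions `M_u ⊆ B(C_{f0})` and
`[C_{f0}] ⊆ B[C_{f0}]` are strict. -/
theorem stmt5 (r t : ℝ) (hr : r ≠ 0) (ht : t ≠ 0) :
    -- x_{kl} = k/(rt) has strongly almost null B-transform
    StronglyAlmostConvTo
      (Btrans r (-r) t (-t) (fun p => (p.1 : ℂ) / (r * t : ℂ))) 0 ∧
    -- but x is unbounded
    (¬ ∃ M : ℝ, ∀ m n : ℕ, ‖((m : ℂ) / (r * t : ℂ))‖ ≤ M) ∧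
    -- M_u ⊂ B(C_{f0}) strictly
    {x : ℕ × ℕ → ℂ | ∃ M : ℝ, ∀ m n : ℕ, ‖x (m, n)‖ ≤ M} ⊂
      {x : ℕ × ℕ → ℂ | AlmostConvTo (Btrans r (-r) t (-t) x) 0} ∧
    -- [C_{f0}] ⊂ B[C_{f0}] strictly
    {x : ℕ × ℕ → ℂ | StronglyAlmostConvTo x 0} ⊂
      {x : ℕ × ℕ → ℂ | StronglyAlmostConvTo (Btrans r (-r) t (-t) x) 0} := by
  have hrtpos : (0:ℝ) < |r*t| := abs_pos.2 (mul_ne_zero hr ht)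
  have part1 : StronglyAlmostConvTo
      (Btrans r (-r) t (-t) (fun p => (p.1 : ℂ) / (r * t : ℂ))) 0 := by
    rw [Bx_eq r t hr ht]; exact indicator_sanull
  have part2 : ¬ ∃ M : ℝ, ∀ m n : ℕ, ‖((m : ℂ) / (r * t : ℂ))‖ ≤ M := by
    rintro ⟨M, hM⟩
    obtain ⟨m, hm⟩ := exists_nat_gt (M * |r*t|)
    have habs : ‖(m : ℂ) / ((r:ℂ) * t)‖ = (m : ℝ) / |r*t| := by
      rw [norm_div, Complex.norm_natCast, norm_mul, Complex.norm_real, Real.norm_eq_abs, Complex.norm_real, Real.norm_eq_abs,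
        ← abs_mul]
    have h2 := hM m 0
    rw [habs, div_le_iff₀ hrtpos] at h2
    linarith
  have notstrong : ¬ StronglyAlmostConvTo (fun p : ℕ × ℕ => (p.1 : ℂ) / (r * t : ℂ)) 0 := by
    intro h
    obtain ⟨Q, hQ⟩ := h 1 one_pos
    set m := ⌈|r*t|⌉₊ with hm
    have hmge : |r*t| ≤ (m:ℝ) := Nat.le_ceil _
    have key := hQ Q Q le_rfl le_rfl m 0
    have hA : (0:ℝ) < ((Q:ℝ)+1) * ((Q:ℝ)+1) := by positivity
    have hsum : ((Q:ℝ)+1) * ((Q:ℝ)+1) ≤ ∑ k ∈ range (Q+1), ∑ l ∈ range (Q+1),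
        ‖(fun p : ℕ × ℕ => (p.1 : ℂ) / (r * t : ℂ)) (m+k, 0+l) - 0‖ := by
      have hterm : ∀ k ∈ range (Q+1), ∀ l ∈ range (Q+1), (1:ℝ) ≤
          ‖(fun p : ℕ × ℕ => (p.1 : ℂ) / (r * t : ℂ)) (m+k, 0+l) - 0‖ := by
        intro k _ l _
        show (1:ℝ) ≤ ‖((m+k : ℕ) : ℂ) / ((r:ℂ)*t) - 0‖
        rw [sub_zero, norm_div, Complex.norm_natCast, norm_mul, Complex.norm_real, Real.norm_eq_abs,
          Complex.norm_real, Real.norm_eq_abs, ← abs_mul, le_div_iff₀ hrtpos]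
        have hk : ((m:ℝ)) ≤ ((m+k : ℕ) : ℝ) := by
          push_cast; linarith [(Nat.cast_nonneg k : (0:ℝ) ≤ (k:ℝ))]
        linarith
      calc ((Q:ℝ)+1) * ((Q:ℝ)+1)
          = ∑ _k ∈ range (Q+1), ∑ _l ∈ range (Q+1), (1:ℝ) := by simp; ring
        _ ≤ _ := Finset.sum_le_sum (fun k hk =>
            Finset.sum_le_sum (fun l hl => hterm k hk l hl))
    have h1 : (1:ℝ) ≤ (1 / (((Q:ℝ)+1) * ((Q:ℝ)+1))) * ∑ k ∈ range (Q+1), ∑ l ∈ range (Q+1),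
        ‖(fun p : ℕ × ℕ => (p.1 : ℂ) / (r * t : ℂ)) (m+k, 0+l) - 0‖ := by
      calc (1:ℝ) = (1 / (((Q:ℝ)+1) * ((Q:ℝ)+1))) * (((Q:ℝ)+1) * ((Q:ℝ)+1)) := by
            field_simp
        _ ≤ _ := mul_le_mul_of_nonneg_left hsum (by positivity)
    have hlt : (1 / (((Q:ℝ)+1) * ((Q:ℝ)+1))) * ∑ k ∈ range (Q+1), ∑ l ∈ range (Q+1),
        ‖(fun p : ℕ × ℕ => (p.1 : ℂ) / (r * t : ℂ)) (m+k, 0+l) - 0‖ < 1 := key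
    linarith
  refine ⟨part1, part2, ?_, ?_⟩
  · rw [Set.ssubset_def]
    constructor
    · rintro x ⟨M, hM⟩
      exact bdd_to_almost r t hr ht x M hM
    · intro hsub
      have hx : (fun p : ℕ × ℕ => (p.1 : ℂ) / (r * t : ℂ)) ∈
          {x : ℕ × ℕ → ℂ | AlmostConvTo (Btrans r (-r) t (-t) x) 0} := by
        rw [Set.mem_setOf_eq]; exact strong_to_almost _ part1
      have h2 := hsub hx
      rw [Set.mem_setOf_eq] at h2
      exact part2 h2
  · rw [Set.ssubset_def]
    constructor
    · intro x hx
      exact strong_B r t hr ht x hx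
    · intro hsub
      have hmem : (fun p : ℕ × ℕ => (p.1 : ℂ) / (r * t : ℂ)) ∈
          {x : ℕ × ℕ → ℂ | StronglyAlmostConvTo (Btrans r (-r) t (-t) x) 0} := by
        rw [Set.mem_setOf_eq]; exact part1
      have h2 := hsub hmem
      rw [Set.mem_setOf_eq] at h2
      exact notstrong h2
end

section
/- Let r, t be nonzero real numbers and set s = −r, u = −t. The double sequence x given by x_{kl} = 1 if k + l is even and x_{kl} = 0 otherwise is bounded but does not belong to B[C_{f0}]; that is, B(r,−r,t,−t)x is not strongly almost null. In particular M_u is not contained in B[C_{f0}]. -/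
open Finset

lemma key_lb (r t : ℝ) (m n : ℕ) :
    |r * t| ≤ ‖Btrans r (-r) t (-t)
      (fun p => if (p.1 + p.2) % 2 = 0 then (1 : ℂ) else 0) (m, n)‖ := by
  have h2 : (0:ℝ) ≤ |r * t| := abs_nonneg _
  unfold Btrans
  rcases m with _ | j <;> rcases n with _ | k
  · norm_num [abs_mul]
  · simp only [Nat.add_sub_cancel]
    rcases Nat.even_or_odd k with hk | hk <;>
      [ (have h1 : (0 + k) % 2 = 0 := by rcases hk with ⟨c, hc⟩; omega;
         have hb : ¬ (0 + (k + 1)) % 2 = 0 := by rcases hk with ⟨c, hc⟩; omega);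
        (have h1 : ¬ (0 + k) % 2 = 0 := by rcases hk with ⟨c, hc⟩; omega;
         have hb : (0 + (k + 1)) % 2 = 0 := by rcases hk with ⟨c, hc⟩; omega)] <;>
      simp only [h1, hb, if_true, if_false] <;> norm_num [abs_mul]
  · simp only [Nat.add_sub_cancel]
    rcases Nat.even_or_odd j with hk | hk <;>
      [ (have h1 : (j + 0) % 2 = 0 := by rcases hk with ⟨c, hc⟩; omega;
         have hb : ¬ (j + 1 + 0) % 2 = 0 := by rcases hk with ⟨c, hc⟩; omega);
        (have h1 : ¬ (j + 0) % 2 = 0 := by rcases hk with ⟨c, hc⟩; omega;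
         have hb : (j + 1 + 0) % 2 = 0 := by rcases hk with ⟨c, hc⟩; omega)] <;>
      simp only [h1, hb, if_true, if_false] <;> norm_num [abs_mul]
  · simp only [Nat.add_sub_cancel]
    rcases Nat.even_or_odd (j + k) with hk | hk <;>
      [ (have h1 : (j + k) % 2 = 0 := by rcases hk with ⟨c, hc⟩; omega;
         have ha : ¬ (j + (k + 1)) % 2 = 0 := by rcases hk with ⟨c, hc⟩; omega;
         have hb : ¬ (j + 1 + k) % 2 = 0 := by rcases hk with ⟨c, hc⟩; omega;
         have hc' : (j + 1 + (k + 1)) % 2 = 0 := by rcases hk with ⟨c, hc⟩; omega);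
        (have h1 : ¬ (j + k) % 2 = 0 := by rcases hk with ⟨c, hc⟩; omega;
         have ha : (j + (k + 1)) % 2 = 0 := by rcases hk with ⟨c, hc⟩; omega;
         have hb : (j + 1 + k) % 2 = 0 := by rcases hk with ⟨c, hc⟩; omega;
         have hc' : ¬ (j + 1 + (k + 1)) % 2 = 0 := by rcases hk with ⟨c, hc⟩; omega)] <;>
      simp only [h1, ha, hb, hc', if_true, if_false] <;>
      · norm_num
        first
        | rw [show ((r:ℂ) * ↑t + ↑r * ↑t) = 2 * (↑r * ↑t) by ring]
        | rw [show (-((r:ℂ) * ↑t) + -(↑r * ↑t)) = -(2 * (↑r * ↑t)) by ring, norm_neg]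
        rw [norm_mul, Complex.norm_two, ← Complex.ofReal_mul, Complex.norm_real, Real.norm_eq_abs]
        linarith [abs_mul r t]

lemma not_sac (r t : ℝ) (hr : r ≠ 0) (ht : t ≠ 0) :
    ¬ StronglyAlmostConvTo
        (Btrans r (-r) t (-t) (fun p => if (p.1 + p.2) % 2 = 0 then (1 : ℂ) else 0)) 0 := by
  intro h
  have hrt : |r * t| > 0 := abs_pos.mpr (mul_ne_zero hr ht)
  obtain ⟨Q, hQ⟩ := h (|r * t|) hrt
  have hQ' := hQ Q Q le_rfl le_rfl 0 0
  set P : ℝ := ((Q : ℝ) + 1) * ((Q : ℝ) + 1) with hP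
  have hPpos : 0 < P := by positivity
  have hsum : P * |r * t| ≤
      ∑ k ∈ Finset.range (Q + 1), ∑ l ∈ Finset.range (Q + 1),
        ‖(Btrans r (-r) t (-t)
          (fun p => if (p.1 + p.2) % 2 = 0 then (1 : ℂ) else 0)) (0 + k, 0 + l) - 0‖ := by
    calc P * |r * t| = ∑ _k ∈ Finset.range (Q + 1), ∑ _l ∈ Finset.range (Q + 1), |r * t| := by
          simp [hP]; ring
      _ ≤ _ := by
        refine Finset.sum_le_sum fun k _ => Finset.sum_le_sum fun l _ => ?_
        rw [sub_zero]
        exact key_lb r t (0 + k) (0 + l)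
  have hlt : (1 / P) * (P * |r * t|) ≤ (1 / P) *
      ∑ k ∈ Finset.range (Q + 1), ∑ l ∈ Finset.range (Q + 1),
        ‖(Btrans r (-r) t (-t)
          (fun p => if (p.1 + p.2) % 2 = 0 then (1 : ℂ) else 0)) (0 + k, 0 + l) - 0‖ :=
    mul_le_mul_of_nonneg_left hsum (by positivity)
  rw [one_div, inv_mul_cancel_left₀ (ne_of_gt hPpos), ← one_div] at hlt
  exact absurd (lt_of_le_of_lt hlt hQ') (lt_irrefl _)

/-- With `s = −r`, `u = −t`, the sequence `x_{kl} = 1` for `k+l` even and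
`0` otherwise is bounded but `B(r,−r,t,−t)x` is not strongly almost null; in particular
`M_u` is not contained in `B[C_{f0}]`. -/
theorem stmt6 (r t : ℝ) (hr : r ≠ 0) (ht : t ≠ 0) :
    -- the sequence is bounded
    (∃ M : ℝ, ∀ m n : ℕ,
      ‖(if (m + n) % 2 = 0 then (1 : ℂ) else 0)‖ ≤ M) ∧
    -- its B-transform is not strongly almost null
    ¬ StronglyAlmostConvTo
        (Btrans r (-r) t (-t) (fun p => if (p.1 + p.2) % 2 = 0 then (1 : ℂ) else 0)) 0 ∧
    -- M_u is not contained in B[C_{f0}]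
    ¬ ({x : ℕ × ℕ → ℂ | ∃ M : ℝ, ∀ m n : ℕ, ‖x (m, n)‖ ≤ M} ⊆
        {x : ℕ × ℕ → ℂ | StronglyAlmostConvTo (Btrans r (-r) t (-t) x) 0}) := by
  refine ⟨⟨1, fun m n => by split <;> simp⟩, not_sac r t hr ht, fun hsub => ?_⟩
  exact not_sac r t hr ht
    (hsub ⟨1, fun m n => by dsimp only; split <;> simp⟩)
end

section
/- Let r, t be nonzero real numbers and set s = −r, u = −t. Then [C_f] ⊆ B[C_f]: if a double sequence x is strongly almost convergent (to some L), then B(r,−r,t,−t)x is strongly almost convergent (indeed strongly almost null). -/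
open Finset

lemma shift1 (g : ℕ → ℝ) (hg : ∀ i, 0 ≤ g i) (m q : ℕ) :
    ∑ k ∈ Finset.range (q+1), (if m + k = 0 then 0 else g (m + k - 1)) ≤
      ∑ k ∈ Finset.range (q+1), g (m - 1 + k) := by
  cases m with
  | zero =>
      rw [Finset.sum_range_succ']
      simp only [Nat.zero_add, Nat.add_eq_zero, Nat.succ_ne_zero, and_false, if_false,
        if_pos rfl, ite_true, add_zero, Nat.add_sub_cancel, Nat.zero_sub]
      exact Finset.sum_le_sum_of_subset_of_nonneg
        (Finset.range_subset_range.2 (Nat.le_succ q)) (fun i _ _ => hg i)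
  | succ m =>
      apply le_of_eq
      apply Finset.sum_congr rfl
      intro k _
      rw [if_neg (by omega : ¬ m + 1 + k = 0)]
      congr 1
      omega

lemma Bpt (r t : ℝ) (x : ℕ × ℕ → ℂ) (L : ℂ) (m n : ℕ) :
    Btrans r (-r) t (-t) x (m, n) =
      (r * t : ℂ) * ((x (m, n) - L)
        - (if m = 0 then 0 else x (m - 1, n) - L)
        - (if n = 0 then 0 else x (m, n - 1) - L)
        + (if m = 0 ∨ n = 0 then 0 else x (m - 1, n - 1) - L)
        + (if m = 0 ∧ n = 0 then L else 0)) := by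
  by_cases hm : m = 0 <;> by_cases hn : n = 0 <;>
    simp [Btrans, hm, hn] <;> push_cast <;> ring

lemma Babs (r t : ℝ) (x : ℕ × ℕ → ℂ) (L : ℂ) (m n : ℕ) :
    ‖Btrans r (-r) t (-t) x (m, n)‖ ≤
      (|r| * |t|) * (‖x (m, n) - L‖
        + (if m = 0 then 0 else ‖x (m - 1, n) - L‖)
        + (if n = 0 then 0 else ‖x (m, n - 1) - L‖)
        + (if m = 0 ∨ n = 0 then 0 else ‖x (m - 1, n - 1) - L‖)
        + (if m = 0 ∧ n = 0 then ‖L‖ else 0)) := by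
  rw [Bpt r t x L m n, norm_mul]
  rw [norm_mul, Complex.norm_real, Complex.norm_real, Real.norm_eq_abs, Real.norm_eq_abs]
  apply mul_le_mul_of_nonneg_left _ (by positivity)
  have tri : ∀ a b c d e : ℂ, ‖a - b - c + d + e‖ ≤
      ‖a‖ + ‖b‖ + ‖c‖ + ‖d‖ + ‖e‖ := by
    intro a b c d e
    calc ‖a - b - c + d + e‖
        ≤ ‖a - b - c + d‖ + ‖e‖ := norm_add_le _ _
      _ ≤ (‖a - b - c‖ + ‖d‖) + ‖e‖ := by
          gcongr; exact norm_add_le _ _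
      _ ≤ ((‖a - b‖ + ‖c‖) + ‖d‖) + ‖e‖ := by
          gcongr; exact norm_sub_le _ _
      _ ≤ (((‖a‖ + ‖b‖) + ‖c‖) + ‖d‖)
            + ‖e‖ := by gcongr; exact norm_sub_le _ _
  refine (tri _ _ _ _ _).trans ?_
  apply le_of_eq
  congr 1 <;> [skip; split <;> simp]
  congr 1 <;> [skip; split <;> simp]
  congr 1 <;> [skip; split <;> simp]
  congr 1
  split <;> simp

lemma sum_shift_left (F : ℕ → ℕ → ℝ) (hF : ∀ i j, 0 ≤ F i j) (m n q q' : ℕ) :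
    ∑ k ∈ Finset.range (q+1), ∑ l ∈ Finset.range (q'+1),
        (if m + k = 0 then 0 else F (m + k - 1) (n + l)) ≤
      ∑ k ∈ Finset.range (q+1), ∑ l ∈ Finset.range (q'+1), F (m - 1 + k) (n + l) := by
  rw [Finset.sum_comm, Finset.sum_comm (s := Finset.range (q+1))]
  apply Finset.sum_le_sum
  intro l _
  exact shift1 (fun i => F i (n + l)) (fun i => hF i (n + l)) m q

lemma sum_shift_down (F : ℕ → ℕ → ℝ) (hF : ∀ i j, 0 ≤ F i j) (m n q q' : ℕ) :
    ∑ k ∈ Finset.range (q+1), ∑ l ∈ Finset.range (q'+1),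
        (if n + l = 0 then 0 else F (m + k) (n + l - 1)) ≤
      ∑ k ∈ Finset.range (q+1), ∑ l ∈ Finset.range (q'+1), F (m + k) (n - 1 + l) := by
  apply Finset.sum_le_sum
  intro k _
  exact shift1 (fun j => F (m + k) j) (fun j => hF (m + k) j) n q'

lemma sum_shift_both (F : ℕ → ℕ → ℝ) (hF : ∀ i j, 0 ≤ F i j) (m n q q' : ℕ) :
    ∑ k ∈ Finset.range (q+1), ∑ l ∈ Finset.range (q'+1),
        (if m + k = 0 ∨ n + l = 0 then 0 else F (m + k - 1) (n + l - 1)) ≤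
      ∑ k ∈ Finset.range (q+1), ∑ l ∈ Finset.range (q'+1), F (m - 1 + k) (n - 1 + l) := by
  have step1 : ∑ k ∈ Finset.range (q+1), ∑ l ∈ Finset.range (q'+1),
      (if m + k = 0 ∨ n + l = 0 then 0 else F (m + k - 1) (n + l - 1)) ≤
      ∑ k ∈ Finset.range (q+1), ∑ l ∈ Finset.range (q'+1),
      (if m + k = 0 then 0 else F (m + k - 1) (n - 1 + l)) := by
    apply Finset.sum_le_sum
    intro k _
    by_cases h : m + k = 0
    · simp [h]
    · simp only [h, false_or, if_neg h]
      exact shift1 (fun j => F (m + k - 1) j) (fun j => hF _ j) n q'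
  exact step1.trans (sum_shift_left F hF m (n-1) q q')

lemma sum_corner (c : ℝ) (hc : 0 ≤ c) (m n q q' : ℕ) :
    ∑ k ∈ Finset.range (q+1), ∑ l ∈ Finset.range (q'+1),
        (if m + k = 0 ∧ n + l = 0 then c else 0) ≤ c := by
  have h1 : ∀ k l : ℕ, (if m + k = 0 ∧ n + l = 0 then c else 0) ≤
      (if k = 0 then (if l = 0 then c else 0) else 0) := by
    intro k l
    split
    · next h => rw [if_pos (by omega), if_pos (by omega)]
    · split
      · split <;> simp [hc]
      · simp
  calc ∑ k ∈ Finset.range (q+1), ∑ l ∈ Finset.range (q'+1),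
        (if m + k = 0 ∧ n + l = 0 then c else 0)
      ≤ ∑ k ∈ Finset.range (q+1), ∑ l ∈ Finset.range (q'+1),
        (if k = 0 then (if l = 0 then c else 0) else 0) := by
        apply Finset.sum_le_sum; intro k _; apply Finset.sum_le_sum; intro l _; exact h1 k l
    _ = c := by
        rw [Finset.sum_eq_single 0]
        · simp [Finset.sum_eq_single 0]
        · intro b _ hb; simp [hb]
        · intro h; simp at h


/-- With `s = −r`, `u = −t`: if `x` is strongly almost convergent (to some
`L`), then `B(r,−r,t,−t)x` is strongly almost null; in particular `[C_f] ⊆ B[C_f]`. -/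
theorem stmt7 (r t : ℝ) (hr : r ≠ 0) (ht : t ≠ 0) :
    (∀ (x : ℕ × ℕ → ℂ) (L : ℂ), StronglyAlmostConvTo x L →
      StronglyAlmostConvTo (Btrans r (-r) t (-t) x) 0) ∧
    {x : ℕ × ℕ → ℂ | ∃ L, StronglyAlmostConvTo x L} ⊆
      {x : ℕ × ℕ → ℂ | ∃ L, StronglyAlmostConvTo (Btrans r (-r) t (-t) x) L} := by
  have main : ∀ (x : ℕ × ℕ → ℂ) (L : ℂ), StronglyAlmostConvTo x L →
      StronglyAlmostConvTo (Btrans r (-r) t (-t) x) 0 := by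
    intro x L hx ε hε
    set c : ℝ := |r| * |t| with hcdef
    have hc : 0 < c := mul_pos (abs_pos.2 hr) (abs_pos.2 ht)
    set ε' : ℝ := ε / (5 * c) with hε'def
    have hε' : 0 < ε' := by positivity
    obtain ⟨Q0, hQ0⟩ := hx ε' hε'
    obtain ⟨Q1, hQ1⟩ := exists_nat_ge (5 * c * ‖L‖ / ε)
    refine ⟨max Q0 Q1, fun q q' hq hq' m n => ?_⟩
    have hq0 : Q0 ≤ q := le_trans (le_max_left _ _) hq
    have hq0' : Q0 ≤ q' := le_trans (le_max_left _ _) hq'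
    have hq1 : Q1 ≤ q := le_trans (le_max_right _ _) hq
    set N : ℝ := ((q : ℝ) + 1) * ((q' : ℝ) + 1) with hNdef
    have hN : 0 < N := by positivity
    set F : ℕ → ℕ → ℝ := fun i j => ‖x (i, j) - L‖ with hFdef
    have hFnn : ∀ i j, 0 ≤ F i j := fun i j => norm_nonneg _
    set S : ℕ → ℕ → ℝ := fun a b =>
      ∑ k ∈ Finset.range (q + 1), ∑ l ∈ Finset.range (q' + 1), F (a + k) (b + l) with hSdef
    have hsum : ∑ k ∈ Finset.range (q + 1), ∑ l ∈ Finset.range (q' + 1),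
        ‖Btrans r (-r) t (-t) x (m + k, n + l) - 0‖ ≤
        c * (S m n + S (m - 1) n + S m (n - 1) + S (m - 1) (n - 1) + ‖L‖) := by
      calc ∑ k ∈ Finset.range (q + 1), ∑ l ∈ Finset.range (q' + 1),
            ‖Btrans r (-r) t (-t) x (m + k, n + l) - 0‖
          ≤ ∑ k ∈ Finset.range (q + 1), ∑ l ∈ Finset.range (q' + 1),
            (c * (F (m + k) (n + l)
              + (if m + k = 0 then 0 else F (m + k - 1) (n + l))
              + (if n + l = 0 then 0 else F (m + k) (n + l - 1))
              + (if m + k = 0 ∨ n + l = 0 then 0 else F (m + k - 1) (n + l - 1))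
              + (if m + k = 0 ∧ n + l = 0 then ‖L‖ else 0))) := by
            apply Finset.sum_le_sum; intro k _
            apply Finset.sum_le_sum; intro l _
            rw [sub_zero]
            exact Babs r t x L (m + k) (n + l)
        _ = c * (S m n
            + (∑ k ∈ Finset.range (q + 1), ∑ l ∈ Finset.range (q' + 1),
                (if m + k = 0 then 0 else F (m + k - 1) (n + l)))
            + (∑ k ∈ Finset.range (q + 1), ∑ l ∈ Finset.range (q' + 1),
                (if n + l = 0 then 0 else F (m + k) (n + l - 1)))
            + (∑ k ∈ Finset.range (q + 1), ∑ l ∈ Finset.range (q' + 1),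
                (if m + k = 0 ∨ n + l = 0 then 0 else F (m + k - 1) (n + l - 1)))
            + (∑ k ∈ Finset.range (q + 1), ∑ l ∈ Finset.range (q' + 1),
                (if m + k = 0 ∧ n + l = 0 then ‖L‖ else 0))) := by
            simp only [hSdef, ← Finset.mul_sum, Finset.sum_add_distrib]
        _ ≤ c * (S m n + S (m - 1) n + S m (n - 1) + S (m - 1) (n - 1) + ‖L‖) := by
            apply mul_le_mul_of_nonneg_left _ hc.le
            gcongr
            · exact sum_shift_left F hFnn m n q q'
            · exact sum_shift_down F hFnn m n q q'
            · exact sum_shift_both F hFnn m n q q'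
            · exact sum_corner (‖L‖) (norm_nonneg L) m n q q'
    have h0 : (1 / N) * S m n < ε' := hQ0 q q' hq0 hq0' m n
    have h1 : (1 / N) * S (m - 1) n < ε' := hQ0 q q' hq0 hq0' (m - 1) n
    have h2 : (1 / N) * S m (n - 1) < ε' := hQ0 q q' hq0 hq0' m (n - 1)
    have h3 : (1 / N) * S (m - 1) (n - 1) < ε' := hQ0 q q' hq0 hq0' (m - 1) (n - 1)
    have hce : c * ε' = ε / 5 := by
      rw [hε'def]; field_simp
    have hNge : (Q1 : ℝ) ≤ N := by
      have : (Q1 : ℝ) ≤ (q : ℝ) := Nat.cast_le.2 hq1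
      nlinarith [Nat.cast_nonneg (α := ℝ) q']
    have hQ1' : 5 * c * ‖L‖ ≤ (Q1 : ℝ) * ε := by
      rw [div_le_iff₀ hε] at hQ1; exact hQ1
    have hcorner : c * ‖L‖ / N ≤ ε / 5 := by
      rw [div_le_div_iff₀ hN (by norm_num : (0 : ℝ) < 5)]
      nlinarith [hε.le]
    calc (1 / N) * ∑ k ∈ Finset.range (q + 1), ∑ l ∈ Finset.range (q' + 1),
          ‖Btrans r (-r) t (-t) x (m + k, n + l) - 0‖
        ≤ (1 / N) * (c * (S m n + S (m - 1) n + S m (n - 1) + S (m - 1) (n - 1)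
            + ‖L‖)) := by
          exact mul_le_mul_of_nonneg_left hsum (by positivity)
      _ = c * ((1 / N) * S m n) + c * ((1 / N) * S (m - 1) n)
          + c * ((1 / N) * S m (n - 1)) + c * ((1 / N) * S (m - 1) (n - 1))
          + c * ‖L‖ / N := by ring
      _ < ε := by
          have k0 := mul_lt_mul_of_pos_left h0 hc
          have k1 := mul_lt_mul_of_pos_left h1 hc
          have k2 := mul_lt_mul_of_pos_left h2 hc
          have k3 := mul_lt_mul_of_pos_left h3 hc
          linarith
  exact ⟨main, fun x ⟨L, hL⟩ => ⟨0, main x L hL⟩⟩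
end

section
/- Let r, t be nonzero real numbers and set s = −r, u = −t. Then [C_{f0}] ⊆ B[C_{f0}]: if a double sequence x is strongly almost null, then B(r,−r,t,−t)x is strongly almost null. -/
open Finset

/-- One-dimensional shift bound for nonnegative terms. -/
lemma shift_sum (g : ℕ → ℝ) (hg : ∀ i, 0 ≤ g i) (m q : ℕ) :
    ∑ k ∈ Finset.range (q + 1), (if m + k = 0 then 0 else g (m + k - 1)) ≤
    ∑ k ∈ Finset.range (q + 1), g (m - 1 + k) := by
  cases m with
  | zero =>
    calc ∑ k ∈ Finset.range (q + 1), (if 0 + k = 0 then 0 else g (0 + k - 1))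
        = ∑ i ∈ Finset.range q, g i := by rw [Finset.sum_range_succ']; simp
      _ ≤ ∑ i ∈ Finset.range (q + 1), g i := by
          rw [Finset.sum_range_succ]; linarith [hg q]
      _ = ∑ k ∈ Finset.range (q + 1), g (0 - 1 + k) := by simp
  | succ m' =>
    refine le_of_eq (Finset.sum_congr rfl fun k _ => ?_)
    have h : m' + 1 + k ≠ 0 := by omega
    rw [if_neg h]
    congr 1
    omega

/-- With `s = −r`, `u = −t`: if `x` is strongly almost null then so is
`B(r,−r,t,−t)x`; that is, `[C_{f0}] ⊆ B[C_{f0}]`. -/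
theorem stmt8 (r t : ℝ) (hr : r ≠ 0) (ht : t ≠ 0) :
    ∀ x : ℕ × ℕ → ℂ, StronglyAlmostConvTo x 0 →
      StronglyAlmostConvTo (Btrans r (-r) t (-t) x) 0 := by
  intro x hx ε hε
  have hKpos : 0 < |r| * |t| := mul_pos (abs_pos.2 hr) (abs_pos.2 ht)
  set K : ℝ := |r| * |t| with hKdef
  have hK0 : K ≠ 0 := ne_of_gt hKpos
  obtain ⟨Q, hQ⟩ := hx (ε / (4 * K)) (by positivity)
  refine ⟨Q, fun q q' hq hq' m n => ?_⟩
  set D : ℝ := ((q : ℝ) + 1) * ((q' : ℝ) + 1) with hDdef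
  have hD : 0 < D := by positivity
  have hQ' : ∀ m' n' : ℕ, (1 / D) * ∑ k ∈ Finset.range (q + 1), ∑ l ∈ Finset.range (q' + 1),
      ‖x (m' + k, n' + l)‖ < ε / (4 * K) := by
    intro m' n'
    have h := hQ q q' hq hq' m' n'
    simp only [sub_zero] at h
    rw [hDdef]
    exact h
  set A : ℕ → ℕ → ℝ := fun k l =>
    ‖if m + k = 0 ∨ n + l = 0 then 0 else x (m + k - 1, n + l - 1)‖ with hA
  set B : ℕ → ℕ → ℝ := fun k l =>
    ‖if m + k = 0 then 0 else x (m + k - 1, n + l)‖ with hB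
  set C : ℕ → ℕ → ℝ := fun k l =>
    ‖if n + l = 0 then 0 else x (m + k, n + l - 1)‖ with hC
  set E : ℕ → ℕ → ℝ := fun k l => ‖x (m + k, n + l)‖ with hE
  -- pointwise bound
  have hpt : ∀ k l, ‖Btrans r (-r) t (-t) x (m + k, n + l) - 0‖ ≤
      K * (A k l + B k l + C k l + E k l) := by
    intro k l
    rw [sub_zero]
    show ‖_ + _ + _ + _‖ ≤ _
    calc ‖_ + _ + _ + _‖
        ≤ ‖_ + _ + _‖ + ‖_‖ := norm_add_le _ _
      _ ≤ (‖_ + _‖ + ‖_‖) + ‖_‖ := by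
          gcongr; exact norm_add_le _ _
      _ ≤ ((‖_‖ + ‖_‖) + ‖_‖) + ‖_‖ := by
          gcongr; exact norm_add_le _ _
      _ ≤ K * (A k l + B k l + C k l + E k l) := by
          simp only [norm_mul, Complex.norm_real, Real.norm_eq_abs, norm_neg, abs_neg, hA, hB, hC, hE, hKdef]
          ring_nf
          rfl
  -- sum bound
  have hsum : ∑ k ∈ Finset.range (q + 1), ∑ l ∈ Finset.range (q' + 1),
      ‖Btrans r (-r) t (-t) x (m + k, n + l) - 0‖ ≤
      K * ((∑ k ∈ Finset.range (q + 1), ∑ l ∈ Finset.range (q' + 1), A k l) +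
           (∑ k ∈ Finset.range (q + 1), ∑ l ∈ Finset.range (q' + 1), B k l) +
           (∑ k ∈ Finset.range (q + 1), ∑ l ∈ Finset.range (q' + 1), C k l) +
           (∑ k ∈ Finset.range (q + 1), ∑ l ∈ Finset.range (q' + 1), E k l)) := by
    calc ∑ k ∈ Finset.range (q + 1), ∑ l ∈ Finset.range (q' + 1),
          ‖Btrans r (-r) t (-t) x (m + k, n + l) - 0‖
        ≤ ∑ k ∈ Finset.range (q + 1), ∑ l ∈ Finset.range (q' + 1),
            K * (A k l + B k l + C k l + E k l) :=
          Finset.sum_le_sum fun k _ => Finset.sum_le_sum fun l _ => hpt k l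
      _ = _ := by
          simp only [← Finset.mul_sum]
          congr 1
          simp [Finset.sum_add_distrib]
  -- shifted-sum bounds for each piece
  have hSA : ∑ k ∈ Finset.range (q + 1), ∑ l ∈ Finset.range (q' + 1), A k l ≤
      ∑ k ∈ Finset.range (q + 1), ∑ l ∈ Finset.range (q' + 1),
        ‖x (m - 1 + k, n - 1 + l)‖ := by
    have step : ∀ k, ∑ l ∈ Finset.range (q' + 1), A k l ≤
        (if m + k = 0 then 0 else
          ∑ l ∈ Finset.range (q' + 1), ‖x (m + k - 1, n - 1 + l)‖) := by
      intro k
      by_cases hk : m + k = 0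
      · rw [if_pos hk]
        refine le_of_eq (Finset.sum_eq_zero fun l _ => ?_)
        simp only [hA]
        rw [if_pos (Or.inl hk)]
        exact norm_zero
      · rw [if_neg hk]
        calc ∑ l ∈ Finset.range (q' + 1), A k l
            = ∑ l ∈ Finset.range (q' + 1),
                (if n + l = 0 then 0 else ‖x (m + k - 1, n + l - 1)‖) := by
              refine Finset.sum_congr rfl fun l _ => ?_
              simp only [hA]
              by_cases hl : n + l = 0
              · rw [if_pos (Or.inr hl), if_pos hl]; exact norm_zero
              · rw [if_neg (by tauto), if_neg hl]
          _ ≤ _ := shift_sum (fun j => ‖x (m + k - 1, j)‖)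
              (fun j => norm_nonneg _) n q'
    calc ∑ k ∈ Finset.range (q + 1), ∑ l ∈ Finset.range (q' + 1), A k l
        ≤ ∑ k ∈ Finset.range (q + 1), (if m + k = 0 then 0 else
            ∑ l ∈ Finset.range (q' + 1), ‖x (m + k - 1, n - 1 + l)‖) :=
          Finset.sum_le_sum fun k _ => step k
      _ ≤ _ := shift_sum (fun j => ∑ l ∈ Finset.range (q' + 1), ‖x (j, n - 1 + l)‖)
          (fun j => Finset.sum_nonneg fun l _ => norm_nonneg _) m q
  have hSB : ∑ k ∈ Finset.range (q + 1), ∑ l ∈ Finset.range (q' + 1), B k l ≤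
      ∑ k ∈ Finset.range (q + 1), ∑ l ∈ Finset.range (q' + 1),
        ‖x (m - 1 + k, n + l)‖ := by
    calc ∑ k ∈ Finset.range (q + 1), ∑ l ∈ Finset.range (q' + 1), B k l
        = ∑ k ∈ Finset.range (q + 1), (if m + k = 0 then 0 else
            ∑ l ∈ Finset.range (q' + 1), ‖x (m + k - 1, n + l)‖) := by
          refine Finset.sum_congr rfl fun k _ => ?_
          by_cases hk : m + k = 0
          · rw [if_pos hk]
            exact Finset.sum_eq_zero fun l _ => by
              simp only [hB]; rw [if_pos hk]; exact norm_zero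
          · rw [if_neg hk]
            refine Finset.sum_congr rfl fun l _ => ?_
            simp only [hB]; rw [if_neg hk]
      _ ≤ _ := shift_sum (fun j => ∑ l ∈ Finset.range (q' + 1), ‖x (j, n + l)‖)
          (fun j => Finset.sum_nonneg fun l _ => norm_nonneg _) m q
  have hSC : ∑ k ∈ Finset.range (q + 1), ∑ l ∈ Finset.range (q' + 1), C k l ≤
      ∑ k ∈ Finset.range (q + 1), ∑ l ∈ Finset.range (q' + 1),
        ‖x (m + k, n - 1 + l)‖ := by
    refine Finset.sum_le_sum fun k _ => ?_
    calc ∑ l ∈ Finset.range (q' + 1), C k l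
        = ∑ l ∈ Finset.range (q' + 1),
            (if n + l = 0 then 0 else ‖x (m + k, n + l - 1)‖) := by
          refine Finset.sum_congr rfl fun l _ => ?_
          simp only [hC]
          by_cases hl : n + l = 0
          · rw [if_pos hl, if_pos hl]; exact norm_zero
          · rw [if_neg hl, if_neg hl]
      _ ≤ _ := shift_sum (fun j => ‖x (m + k, j)‖)
          (fun j => norm_nonneg _) n q'
  -- combine
  have h1 : (1 / D) * ∑ k ∈ Finset.range (q + 1), ∑ l ∈ Finset.range (q' + 1), A k l <
      ε / (4 * K) :=
    lt_of_le_of_lt (mul_le_mul_of_nonneg_left hSA (by positivity)) (hQ' (m - 1) (n - 1))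
  have h2 : (1 / D) * ∑ k ∈ Finset.range (q + 1), ∑ l ∈ Finset.range (q' + 1), B k l <
      ε / (4 * K) :=
    lt_of_le_of_lt (mul_le_mul_of_nonneg_left hSB (by positivity)) (hQ' (m - 1) n)
  have h3 : (1 / D) * ∑ k ∈ Finset.range (q + 1), ∑ l ∈ Finset.range (q' + 1), C k l <
      ε / (4 * K) :=
    lt_of_le_of_lt (mul_le_mul_of_nonneg_left hSC (by positivity)) (hQ' m (n - 1))
  have h4 : (1 / D) * ∑ k ∈ Finset.range (q + 1), ∑ l ∈ Finset.range (q' + 1), E k l <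
      ε / (4 * K) := hQ' m n
  calc (1 / D) * ∑ k ∈ Finset.range (q + 1), ∑ l ∈ Finset.range (q' + 1),
        ‖Btrans r (-r) t (-t) x (m + k, n + l) - 0‖
      ≤ (1 / D) * (K * ((∑ k ∈ Finset.range (q + 1), ∑ l ∈ Finset.range (q' + 1), A k l) +
           (∑ k ∈ Finset.range (q + 1), ∑ l ∈ Finset.range (q' + 1), B k l) +
           (∑ k ∈ Finset.range (q + 1), ∑ l ∈ Finset.range (q' + 1), C k l) +
           (∑ k ∈ Finset.range (q + 1), ∑ l ∈ Finset.range (q' + 1), E k l))) :=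
        mul_le_mul_of_nonneg_left hsum (by positivity)
    _ = K * ((1 / D) * (∑ k ∈ Finset.range (q + 1), ∑ l ∈ Finset.range (q' + 1), A k l) +
          (1 / D) * (∑ k ∈ Finset.range (q + 1), ∑ l ∈ Finset.range (q' + 1), B k l) +
          (1 / D) * (∑ k ∈ Finset.range (q + 1), ∑ l ∈ Finset.range (q' + 1), C k l) +
          (1 / D) * (∑ k ∈ Finset.range (q + 1), ∑ l ∈ Finset.range (q' + 1), E k l)) := by
        ring
    _ < K * (4 * (ε / (4 * K))) := by
        apply mul_lt_mul_of_pos_left _ hKpos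
        linarith
    _ = ε := by field_simp
end

section
/- The double sequence x defined by x_{kl} = (−1)^l for all k, l ∈ ℕ is almost convergent (with f2-lim x = 0) but is not strongly almost convergent to any limit; hence the inclusion [C_f] ⊆ C_f is strict. -/
open Finset

lemma pair_sum (L : ℂ) (N : ℕ) :
    (2 * N : ℝ) ≤ ∑ l ∈ Finset.range (2 * N), ‖(-1 : ℂ) ^ l - L‖ := by
  induction N with
  | zero => simp
  | succ N ih =>
    have h2 : 2 * (N + 1) = (2 * N + 1) + 1 := by ring
    rw [h2, Finset.sum_range_succ, Finset.sum_range_succ]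
    have hpow1 : ((-1 : ℂ)) ^ (2 * N) = 1 := by
      rw [pow_mul]; norm_num
    have hpow2 : ((-1 : ℂ)) ^ (2 * N + 1) = -1 := by
      rw [pow_succ, hpow1]; ring
    have key : (2 : ℝ) ≤ ‖(1 : ℂ) - L‖ + ‖((-1 : ℂ)) - L‖ := by
      have h := norm_sub_le_norm_sub_add_norm_sub (1 : ℂ) L (-1)
      have e1 : ‖(1 : ℂ) - (-1)‖ = 2 := by norm_num
      have e2 : ‖L - (-1)‖ = ‖((-1 : ℂ)) - L‖ := by
        rw [norm_sub_rev]
      rw [e1, e2] at h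
      linarith
    rw [hpow1, hpow2]
    push_cast
    linarith

lemma strong_imp_almost (x : ℕ × ℕ → ℂ) (L : ℂ)
    (h : StronglyAlmostConvTo x L) : AlmostConvTo x L := by
  intro ε hε
  obtain ⟨Q, hQ⟩ := h ε hε
  refine ⟨Q, fun q q' hq hq' m n => ?_⟩
  have hq0 : ((q : ℂ) + 1) ≠ 0 := Nat.cast_add_one_ne_zero q
  have hq'0 : ((q' : ℂ) + 1) ≠ 0 := Nat.cast_add_one_ne_zero q'
  have hrw : (1 / (((q : ℂ) + 1) * ((q' : ℂ) + 1))) *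
      (∑ k ∈ Finset.range (q + 1), ∑ l ∈ Finset.range (q' + 1), x (m + k, n + l)) - L =
      (1 / (((q : ℂ) + 1) * ((q' : ℂ) + 1))) *
      (∑ k ∈ Finset.range (q + 1), ∑ l ∈ Finset.range (q' + 1), (x (m + k, n + l) - L)) := by
    have : ∑ k ∈ Finset.range (q + 1), ∑ l ∈ Finset.range (q' + 1), (x (m + k, n + l) - L)
        = (∑ k ∈ Finset.range (q + 1), ∑ l ∈ Finset.range (q' + 1), x (m + k, n + l))
          - ((q : ℂ) + 1) * ((q' : ℂ) + 1) * L := by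
      simp only [Finset.sum_sub_distrib, Finset.sum_const, Finset.card_range, nsmul_eq_mul]
      push_cast
      ring
    rw [this, mul_sub]
    field_simp
  rw [hrw, norm_mul]
  have habs1 : ‖1 / (((q : ℂ) + 1) * ((q' : ℂ) + 1))‖
      = 1 / (((q : ℝ) + 1) * ((q' : ℝ) + 1)) := by
    have : (1 / (((q : ℂ) + 1) * ((q' : ℂ) + 1)))
        = ((1 / (((q : ℝ) + 1) * ((q' : ℝ) + 1)) : ℝ) : ℂ) := by push_cast; ring
    rw [this, Complex.norm_real, Real.norm_eq_abs, abs_of_pos (by positivity)]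
  rw [habs1]
  have hpos : (0 : ℝ) < 1 / (((q : ℝ) + 1) * ((q' : ℝ) + 1)) := by positivity
  have htri : ‖∑ k ∈ Finset.range (q + 1), ∑ l ∈ Finset.range (q' + 1),
      (x (m + k, n + l) - L)‖ ≤ ∑ k ∈ Finset.range (q + 1), ∑ l ∈ Finset.range (q' + 1),
      ‖x (m + k, n + l) - L‖ := by
    refine le_trans (norm_sum_le _ _) (Finset.sum_le_sum fun k _ => ?_)
    exact norm_sum_le _ _
  calc (1 / (((q : ℝ) + 1) * ((q' : ℝ) + 1))) * ‖∑ k ∈ Finset.range (q + 1),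
        ∑ l ∈ Finset.range (q' + 1), (x (m + k, n + l) - L)‖
      ≤ (1 / (((q : ℝ) + 1) * ((q' : ℝ) + 1))) * ∑ k ∈ Finset.range (q + 1),
        ∑ l ∈ Finset.range (q' + 1), ‖x (m + k, n + l) - L‖ := by
        exact mul_le_mul_of_nonneg_left htri hpos.le
    _ < ε := hQ q q' hq hq' m n

/-- The sequence `x_{kl} = (−1)^l` is almost convergent to `0` but not
strongly almost convergent to any limit; hence `[C_f] ⊂ C_f` strictly. -/
theorem stmt11 :
    AlmostConvTo (fun p => (-1 : ℂ) ^ p.2) 0 ∧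
    (¬ ∃ L : ℂ, StronglyAlmostConvTo (fun p => (-1 : ℂ) ^ p.2) L) ∧
    {x : ℕ × ℕ → ℂ | ∃ L, StronglyAlmostConvTo x L} ⊂
      {x : ℕ × ℕ → ℂ | ∃ L, AlmostConvTo x L} := by
  have h1 : AlmostConvTo (fun p => (-1 : ℂ) ^ p.2) 0 := by
    intro ε hε
    obtain ⟨Q, hQ⟩ := exists_nat_gt (1 / ε)
    refine ⟨Q, fun q q' hq hq' m n => ?_⟩
    set S : ℂ := ∑ l ∈ Finset.range (q' + 1), (-1 : ℂ) ^ (n + l) with hS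
    have hSabs : ‖S‖ ≤ 1 := by
      have : S = (-1 : ℂ) ^ n * ∑ l ∈ Finset.range (q' + 1), (-1 : ℂ) ^ l := by
        rw [hS, Finset.mul_sum]
        exact Finset.sum_congr rfl fun l _ => by rw [pow_add]
      rw [this, norm_mul, neg_one_geom_sum]
      split_ifs <;> simp
    have hsum : (∑ k ∈ Finset.range (q + 1), ∑ l ∈ Finset.range (q' + 1),
        (fun p : ℕ × ℕ => (-1 : ℂ) ^ p.2) (m + k, n + l)) = ((q : ℂ) + 1) * S := by
      simp only [hS]
      rw [Finset.sum_const, Finset.card_range, nsmul_eq_mul]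
      push_cast
      ring
    rw [sub_zero, hsum, norm_mul, norm_mul]
    have e1 : ‖1 / (((q : ℂ) + 1) * ((q' : ℂ) + 1))‖
        = 1 / (((q : ℝ) + 1) * ((q' : ℝ) + 1)) := by
      have : (1 / (((q : ℂ) + 1) * ((q' : ℂ) + 1)))
          = ((1 / (((q : ℝ) + 1) * ((q' : ℝ) + 1)) : ℝ) : ℂ) := by push_cast; ring
      rw [this, Complex.norm_real, Real.norm_eq_abs, abs_of_pos (by positivity)]
    have e2 : ‖(q : ℂ) + 1‖ = (q : ℝ) + 1 := by
      have : ((q : ℂ) + 1) = (((q : ℝ) + 1 : ℝ) : ℂ) := by push_cast; ring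
      rw [this, Complex.norm_real, Real.norm_eq_abs, abs_of_pos (by positivity)]
    rw [e1, e2]
    have hq1 : (0 : ℝ) < (q : ℝ) + 1 := by positivity
    have hq'1 : (0 : ℝ) < (q' : ℝ) + 1 := by positivity
    have hbound : 1 / (((q : ℝ) + 1) * ((q' : ℝ) + 1)) * (((q : ℝ) + 1) * ‖S‖)
        ≤ 1 / ((q' : ℝ) + 1) := by
      rw [div_mul_eq_mul_div, one_mul, div_le_div_iff₀ (by positivity) hq'1]
      nlinarith [mul_nonneg (mul_nonneg hq1.le hq'1.le) (sub_nonneg.mpr hSabs)]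
    have hfin : 1 / ((q' : ℝ) + 1) < ε := by
      rw [div_lt_iff₀ (by positivity)]
      have hQq' : (Q : ℝ) ≤ (q' : ℝ) := by exact_mod_cast hq'
      have h1e : 1 / ε < (q' : ℝ) + 1 := by linarith
      calc (1 : ℝ) = ε * (1 / ε) := by field_simp
        _ < ε * ((q' : ℝ) + 1) := by
            exact mul_lt_mul_of_pos_left h1e hε
    linarith [hbound, hfin]
  have h2 : ¬ ∃ L : ℂ, StronglyAlmostConvTo (fun p => (-1 : ℂ) ^ p.2) L := by
    rintro ⟨L, hL⟩
    obtain ⟨Q, hQ⟩ := hL (1 / 2) (by norm_num)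
    set q : ℕ := 2 * Q + 1 with hqdef
    have hle : Q ≤ q := by omega
    have hmain := hQ q q hle hle 0 0
    set T : ℝ := ∑ l ∈ Finset.range (q + 1),
        ‖(fun p : ℕ × ℕ => (-1 : ℂ) ^ p.2) (0 + 0, 0 + l) - L‖ with hT
    have hTsum : ∀ k : ℕ, (∑ l ∈ Finset.range (q + 1),
        ‖(fun p : ℕ × ℕ => (-1 : ℂ) ^ p.2) (0 + k, 0 + l) - L‖) = T := by
      intro k; rfl
    have hsum : (∑ k ∈ Finset.range (q + 1), ∑ l ∈ Finset.range (q + 1),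
        ‖(fun p : ℕ × ℕ => (-1 : ℂ) ^ p.2) (0 + k, 0 + l) - L‖)
        = ((q : ℝ) + 1) * T := by
      rw [Finset.sum_congr rfl fun k _ => hTsum k, Finset.sum_const, Finset.card_range,
        nsmul_eq_mul]
      push_cast; ring
    have hTge : ((q : ℝ) + 1) ≤ T := by
      have hps := pair_sum L (Q + 1)
      have hq1 : q + 1 = 2 * (Q + 1) := by omega
      have hTeq : T = ∑ l ∈ Finset.range (2 * (Q + 1)), ‖(-1 : ℂ) ^ l - L‖ := by
        rw [hT, hq1]; simp
      have hcast : ((q : ℝ) + 1) = 2 * ((Q + 1 : ℕ) : ℝ) := by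
        rw [hqdef]; push_cast; ring
      rw [hTeq, hcast]
      exact hps
    rw [hsum] at hmain
    have hq1 : (0 : ℝ) < (q : ℝ) + 1 := by positivity
    have heq : 1 / (((q : ℝ) + 1) * ((q : ℝ) + 1)) * (((q : ℝ) + 1) * T)
        = T / ((q : ℝ) + 1) := by field_simp
    rw [heq] at hmain
    have : (1 : ℝ) ≤ T / ((q : ℝ) + 1) := (one_le_div hq1).mpr hTge
    linarith
  refine ⟨h1, h2, ?_⟩
  rw [Set.ssubset_def]
  constructor
  · rintro x ⟨L, hL⟩
    exact ⟨L, strong_imp_almost x L hL⟩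
  · intro hsub
    exact h2 (hsub ⟨0, h1⟩)
end
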